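/- Let M be a one-way DPPDA satisfying the normal-form properties and let G_M be the PEG constructed from M. For every input w = w₁⋯w_n (w_i ∈ Σ), all states q, p, every stack symbol Z, and every position i with 1 ≤ i ≤ n+1: (1) there exists j ≥ i with R([qZp↓], w_i⋯w_n) = w_j⋯w_n if and only if for every tag i' the run of M from configuration (q, (Z, i'), i) ends by popping Z in state p at head position j, with final pop direction ↓; (2) there exists j ≥ i with R([qZp̄], w_i⋯w_n) = w_j⋯w_n if and only if for every tag i' the run of M from (q, (Z, i'), i) ends by popping Z in state p at head position i', with final pop direction ↑; (3) R([qZp↑], w_i⋯w_n) = w_i⋯w_n if and only if for every tag i' the run of M from (q, (Z, i'), i) ends by popping Z in state p at head position i', with final pop direction ↑. (Here j = n+1 corresponds to R returning the empty word, i.e., the head standing on the right end marker.) -/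

import Mathlib

/-! ### Parsing expression grammars -/

/-- Parsing expressions over nonterminals `N` and input alphabet `A`:
`ε`, terminals, nonterminals, sequence, prioritized choice, not-predicate. -/
inductive PExp (N A : Type) : Type where
  | eps : PExp N A
  | term : A → PExp N A
  | nt : N → PExp N A
  | seq : PExp N A → PExp N A → PExp N A
  | choice : PExp N A → PExp N A → PExp N A
  | not : PExp N A → PExp N A

/-- A parsing expression grammar: one rule per nonterminal, and an axiom. -/
structure PEG (N A : Type) : Type where
  rule : N → PExp N A
  start : N

/-- Big-step relational semantics of the PEG parsing function `R`:
`Parses G e w r` means `R(e, w) = r`, where `r = none` encodes the failure `F`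
and `r = some s` means that `e` consumed a prefix of `w` leaving the suffix `s`.
`R(e, w)` is defined iff `∃ r, Parses G e w r`. -/
inductive Parses {N A : Type} (G : PEG N A) : PExp N A → List A → Option (List A) → Prop where
  | eps (w : List A) : Parses G .eps w (some w)
  | term_ok (a : A) (s : List A) : Parses G (.term a) (a :: s) (some s)
  | term_mismatch {a b : A} (s : List A) (h : a ≠ b) : Parses G (.term a) (b :: s) none
  | term_nil (a : A) : Parses G (.term a) [] none
  | nt {B : N} {w : List A} {r : Option (List A)} :
      Parses G (G.rule B) w r → Parses G (.nt B) w r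
  | seq_ok {e₁ e₂ : PExp N A} {w w' : List A} {r : Option (List A)} :
      Parses G e₁ w (some w') → Parses G e₂ w' r → Parses G (.seq e₁ e₂) w r
  | seq_fail {e₁ e₂ : PExp N A} {w : List A} :
      Parses G e₁ w none → Parses G (.seq e₁ e₂) w none
  | choice_fst {e₁ e₂ : PExp N A} {w w' : List A} :
      Parses G e₁ w (some w') → Parses G (.choice e₁ e₂) w (some w')
  | choice_snd {e₁ e₂ : PExp N A} {w : List A} {r : Option (List A)} :
      Parses G e₁ w none → Parses G e₂ w r → Parses G (.choice e₁ e₂) w r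
  | not_succ {e : PExp N A} {w : List A} :
      Parses G e w none → Parses G (.not e) w (some w)
  | not_fail {e : PExp N A} {w w' : List A} :
      Parses G e w (some w') → Parses G (.not e) w none

/-- The language generated by a PEG: `L(G) = {w | R(S, w) = ε}`. -/
def PEG.Lang {N A : Type} (G : PEG N A) : Set (List A) :=
  {w | Parses G (.nt G.start) w (some [])}

/-- A PEG is complete if `R(S, w)` is defined for every input `w`. -/
def PEG.Complete {N A : Type} (G : PEG N A) : Prop :=
  ∀ w : List A, ∃ r, Parses G (.nt G.start) w r

/-! ### Deterministic pointer pushdown automata -/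

/-- Tape symbols: the input letters plus the end markers `▷` and `◁`. -/
inductive TSym (A : Type) : Type where
  | lmark : TSym A
  | rmark : TSym A
  | sym : A → TSym A

/-- The symbol in cell `j` of the tape `▷w◁` (cell `0` holds `▷`, cell `|w|+1` holds `◁`). -/
def tapeNth {A : Type} (w : List A) (j : ℕ) : TSym A :=
  if j = 0 then .lmark
  else
    match w[j - 1]? with
    | some a => .sym a
    | none => .rmark

/-- Head directions: move left, stay, return to the stored pointer, move right. -/
inductive Dir : Type where
  | left | down | up | right
deriving DecidableEq

/-- A (two-way) deterministic pointer pushdown automaton.  A transition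
`trans q a Z = some (p, β, d)` pops `(Z, i)` when `β = []` (moving the head by `d`,
where `d = up` returns the head to the position `i` stored with `Z`), and pushes `β`
above `Z` when `β ≠ []` (moving the head by `d`).  Moves `↑` must pop (`α = ε`),
moving left off `▷` and right off `◁` is forbidden. -/
structure DPPDA (Q A Γ : Type) : Type where
  trans : Q → TSym A → Γ → Option (Q × List Γ × Dir)
  init : Q
  Z0 : Γ
  final : Q → Bool
  up_pop : ∀ q a Z p β, trans q a Z = some (p, β, Dir.up) → β = []
  no_left_lmark : ∀ q Z p β, trans q TSym.lmark Z ≠ some (p, β, Dir.left)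
  no_right_rmark : ∀ q Z p β, trans q TSym.rmark Z ≠ some (p, β, Dir.right)

/-- A configuration: state, stack of symbols tagged with the head position at which
they were pushed (top of the stack is the head of the list), and head position. -/
structure Conf (Q Γ : Type) : Type where
  state : Q
  stack : List (Γ × ℕ)
  pos : ℕ

/-- One move of a DPPDA on input `w` (`none` when no move is possible). -/
def DPPDA.step {Q A Γ : Type} (M : DPPDA Q A Γ) (w : List A) (c : Conf Q Γ) :
    Option (Conf Q Γ) :=
  match c.stack with
  | [] => none
  | (Z, i) :: rest =>
    match M.trans c.state (tapeNth w c.pos) Z with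
    | none => none
    | some (p, β, d) =>
      let j' : ℕ :=
        match d with
        | Dir.left => c.pos - 1
        | Dir.down => c.pos
        | Dir.up => i
        | Dir.right => c.pos + 1
      match β with
      | [] => some ⟨p, rest, j'⟩
      | X :: Xs => some ⟨p, ((X :: Xs).map fun Y => (Y, j')) ++ (Z, i) :: rest, j'⟩

/-- Reachability between configurations. -/
def DPPDA.Reaches {Q A Γ : Type} (M : DPPDA Q A Γ) (w : List A) :
    Conf Q Γ → Conf Q Γ → Prop :=
  Relation.ReflTransGen (fun c c' => M.step w c = some c')

/-- Acceptance: from the initial configuration `(q₀, (Z₀, 0), 0)` the automaton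
reaches the right end marker with empty stack in a final state. -/
def DPPDA.Accepts {Q A Γ : Type} (M : DPPDA Q A Γ) (w : List A) : Prop :=
  ∃ qf : Q, M.final qf = true ∧
    M.Reaches w ⟨M.init, [(M.Z0, 0)], 0⟩ ⟨qf, [], w.length + 1⟩

/-- A one-way DPPDA: moves with direction `←` are forbidden. -/
def DPPDA.OneWay {Q A Γ : Type} (M : DPPDA Q A Γ) : Prop :=
  ∀ q a Z p β, M.trans q a Z ≠ some (p, β, Dir.left)

/-- The normal-form properties of a one-way DPPDA used in the DPPDA-to-PEG
construction: pops only use `↓`/`↑`, pushes push exactly one symbol, `Z₀` is never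
pushed (so it occurs only at the bottom of the stack), and pops of `Z₀` (in
particular the final pop) have direction `↓`. -/
def DPPDA.NormalForm {Q A Γ : Type} (M : DPPDA Q A Γ) : Prop :=
  M.OneWay ∧
  (∀ q a Z p d, M.trans q a Z = some (p, ([] : List Γ), d) →
    d = Dir.down ∨ d = Dir.up) ∧
  (∀ q a Z p β d, M.trans q a Z = some (p, β, d) → β.length ≤ 1) ∧
  (∀ q a Z p β d, M.trans q a Z = some (p, β, d) → M.Z0 ∉ β) ∧
  (∀ q a p d, M.trans q a M.Z0 = some (p, ([] : List Γ), d) → d = Dir.down)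

/-- `EndsPop M w q Z t i p d j`: the run of `M` on `w` starting from the
configuration `(q, (Z, t), i)` (a stack consisting of the single entry `Z` tagged
with `t`, head at `i`) eventually pops `Z` — emptying the stack — in state `p`,
via a final pop move with direction `d`, leaving the head at position `j`. -/
def EndsPop {Q A Γ : Type} (M : DPPDA Q A Γ) (w : List A) (q : Q) (Z : Γ)
    (t i : ℕ) (p : Q) (d : Dir) (j : ℕ) : Prop :=
  ∃ c : Conf Q Γ, M.Reaches w ⟨q, [(Z, t)], i⟩ c ∧ c.stack = [(Z, t)] ∧
    M.trans c.state (tapeNth w c.pos) Z = some (p, ([] : List Γ), d) ∧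
    M.step w c = some ⟨p, [], j⟩

/-! ### The PEG constructed from a one-way DPPDA in normal form -/

/-- Tags of the constructed nonterminals: `[qZp↓]`, `[qZp↑]`, `[qZp↕]`, `[qZp̄]`. -/
inductive PTag : Type where
  | dn | up | ud | bar
deriving DecidableEq

/-- Nonterminals of the constructed PEG: the axiom `none`, and `some (q, Z, p, t)`
standing for `[qZp t]`. -/
abbrev NTof (Q Γ : Type) : Type := Option (Q × Γ × Q × PTag)

/-- The failure expression `F = !ε`. -/
def failE {N A : Type} : PExp N A := .not .eps

/-- Prioritized choice of a list of alternatives (empty choice is failure). -/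
def choiceE {N A : Type} (l : List (PExp N A)) : PExp N A := l.foldr PExp.choice failE

/-- The any-character expression `• = a₁ / ⋯ / a_k`. -/
noncomputable def anyE {N A : Type} [Fintype A] : PExp N A :=
  choiceE (((Finset.univ : Finset A).toList).map PExp.term)

/-- The end-of-input expression `!•`. -/
noncomputable def endE {N A : Type} [Fintype A] : PExp N A := .not anyE

/-- The expression consuming the tape symbol `a` (only input letters can be consumed). -/
def consumeE {N A : Type} : TSym A → PExp N A
  | .sym c => .term c
  | _ => failE

/-- The and-predicate `&a` testing for the tape symbol `a` without consuming it
(`◁` corresponds to the end of the remaining input). -/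
noncomputable def testE {N A : Type} [Fintype A] : TSym A → PExp N A
  | .sym c => .not (.not (.term c))
  | .rmark => endE
  | .lmark => failE

/-- The right-hand-side alternative for the nonterminal `[qZp t]` contributed by the
tape symbol `a`, determined by the transition `δ(q, a, Z)` as in the construction. -/
noncomputable def altOf {Q A Γ : Type} [Fintype Q] [DecidableEq Q] [Fintype A]
    (M : DPPDA Q A Γ) (q : Q) (Z : Γ) (p : Q) (t : PTag) (a : TSym A) :
    PExp (NTof Q Γ) A :=
  match M.trans q a Z with
  | none => failE
  | some (r, β, d) =>
    match β, d, t with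
    -- push with `→` : `a [rXs↕][sZp·]` (with `&(⋯)` for the `↑`-version)
    | [X], Dir.right, PTag.dn =>
        choiceE (((Finset.univ : Finset Q).toList).map fun s =>
          PExp.seq (consumeE a)
            (PExp.seq (PExp.nt (some (r, X, s, PTag.ud)))
              (PExp.nt (some (s, Z, p, PTag.dn)))))
    | [X], Dir.right, PTag.bar =>
        choiceE (((Finset.univ : Finset Q).toList).map fun s =>
          PExp.seq (consumeE a)
            (PExp.seq (PExp.nt (some (r, X, s, PTag.ud)))
              (PExp.nt (some (s, Z, p, PTag.bar)))))
    | [X], Dir.right, PTag.up =>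
        choiceE (((Finset.univ : Finset Q).toList).map fun s =>
          PExp.not (PExp.not (PExp.seq (consumeE a)
            (PExp.seq (PExp.nt (some (r, X, s, PTag.ud)))
              (PExp.nt (some (s, Z, p, PTag.bar)))))))
    -- push with `↓` : `(&a) [rXs↕][sZp·]` (with `&(⋯)` for the `↑`-version)
    | [X], Dir.down, PTag.dn =>
        choiceE (((Finset.univ : Finset Q).toList).map fun s =>
          PExp.seq (testE a)
            (PExp.seq (PExp.nt (some (r, X, s, PTag.ud)))
              (PExp.nt (some (s, Z, p, PTag.dn)))))
    | [X], Dir.down, PTag.bar =>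
        choiceE (((Finset.univ : Finset Q).toList).map fun s =>
          PExp.seq (testE a)
            (PExp.seq (PExp.nt (some (r, X, s, PTag.ud)))
              (PExp.nt (some (s, Z, p, PTag.bar)))))
    | [X], Dir.down, PTag.up =>
        choiceE (((Finset.univ : Finset Q).toList).map fun s =>
          PExp.seq (testE a)
            (PExp.not (PExp.not (PExp.seq (PExp.nt (some (r, X, s, PTag.ud)))
              (PExp.nt (some (s, Z, p, PTag.bar)))))))
    -- pop with `↑`
    | [], Dir.up, PTag.dn => failE
    | [], Dir.up, PTag.bar => if r = p then testE a else failE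
    | [], Dir.up, PTag.up => if r = p then testE a else failE
    -- pop with `↓`
    | [], Dir.down, PTag.dn => if r = p then testE a else failE
    | [], Dir.down, PTag.bar => failE
    | [], Dir.down, PTag.up => failE
    -- cases excluded by the normal form
    | _, _, _ => failE

/-- The rules of the constructed PEG: `S ← [q₀Z₀q_f¹↓] / ⋯ / [q₀Z₀q_f^m↓]` over all
final states, `[qZp↕] ← [qZp↓] / [qZp↑]`, and for the remaining nonterminals the
prioritized choice over all tape symbols `a` of the alternatives `altOf`. -/
noncomputable def ruleOf {Q A Γ : Type} [Fintype Q] [DecidableEq Q] [Fintype A]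
    (M : DPPDA Q A Γ) : NTof Q Γ → PExp (NTof Q Γ) A
  | none =>
      choiceE (((((Finset.univ : Finset Q).toList).filter fun qf => M.final qf)).map
        fun qf => PExp.nt (some (M.init, M.Z0, qf, PTag.dn)))
  | some (q, Z, p, PTag.ud) =>
      PExp.choice (PExp.nt (some (q, Z, p, PTag.dn))) (PExp.nt (some (q, Z, p, PTag.up)))
  | some (q, Z, p, t) =>
      choiceE ((TSym.rmark :: (((Finset.univ : Finset A).toList).map TSym.sym)).map
        (altOf M q Z p t))

/-- The PEG `G_M` constructed from a one-way DPPDA `M` in normal form. -/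
noncomputable def PEGof {Q A Γ : Type} [Fintype Q] [DecidableEq Q] [Fintype A]
    (M : DPPDA Q A Γ) : PEG (NTof Q Γ) A :=
  ⟨ruleOf M, none⟩

/-! ### Part 1: generic lemmas about `Parses` -/

section ParsesLemmas

variable {N A : Type} {G : PEG N A}

/-- Sized version of `Parses`. -/
inductive ParsesN {N A : Type} (G : PEG N A) : ℕ → PExp N A → List A → Option (List A) → Prop where
  | eps (n : ℕ) (w : List A) : ParsesN G n .eps w (some w)
  | term_ok (n : ℕ) (a : A) (s : List A) : ParsesN G n (.term a) (a :: s) (some s)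
  | term_mismatch {a b : A} (n : ℕ) (s : List A) (h : a ≠ b) : ParsesN G n (.term a) (b :: s) none
  | term_nil (n : ℕ) (a : A) : ParsesN G n (.term a) [] none
  | nt {n : ℕ} {B : N} {w : List A} {r : Option (List A)} :
      ParsesN G n (G.rule B) w r → ParsesN G (n+1) (.nt B) w r
  | seq_ok {n m : ℕ} {e₁ e₂ : PExp N A} {w w' : List A} {r : Option (List A)} :
      ParsesN G n e₁ w (some w') → ParsesN G m e₂ w' r → ParsesN G (n+m+1) (.seq e₁ e₂) w r
  | seq_fail {n : ℕ} {e₁ e₂ : PExp N A} {w : List A} :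
      ParsesN G n e₁ w none → ParsesN G (n+1) (.seq e₁ e₂) w none
  | choice_fst {n : ℕ} {e₁ e₂ : PExp N A} {w w' : List A} :
      ParsesN G n e₁ w (some w') → ParsesN G (n+1) (.choice e₁ e₂) w (some w')
  | choice_snd {n m : ℕ} {e₁ e₂ : PExp N A} {w : List A} {r : Option (List A)} :
      ParsesN G n e₁ w none → ParsesN G m e₂ w r → ParsesN G (n+m+1) (.choice e₁ e₂) w r
  | not_succ {n : ℕ} {e : PExp N A} {w : List A} :
      ParsesN G n e w none → ParsesN G (n+1) (.not e) w (some w)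
  | not_fail {n : ℕ} {e : PExp N A} {w w' : List A} :
      ParsesN G n e w (some w') → ParsesN G (n+1) (.not e) w none

theorem ParsesN.toParses {n e w r} (h : ParsesN G n e w r) : Parses G e w r := by
  induction h with
  | eps => exact .eps _
  | term_ok => exact .term_ok _ _
  | term_mismatch _ _ h => exact .term_mismatch _ h
  | term_nil => exact .term_nil _
  | nt _ ih => exact .nt ih
  | seq_ok _ _ ih1 ih2 => exact .seq_ok ih1 ih2
  | seq_fail _ ih => exact .seq_fail ih
  | choice_fst _ ih => exact .choice_fst ih
  | choice_snd _ _ ih1 ih2 => exact .choice_snd ih1 ih2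
  | not_succ _ ih => exact .not_succ ih
  | not_fail _ ih => exact .not_fail ih

theorem Parses.toN {e w r} (h : Parses G e w r) : ∃ n, ParsesN G n e w r := by
  induction h with
  | eps => exact ⟨0, .eps _ _⟩
  | term_ok => exact ⟨0, .term_ok _ _ _⟩
  | term_mismatch _ h => exact ⟨0, .term_mismatch _ _ h⟩
  | term_nil => exact ⟨0, .term_nil _ _⟩
  | nt _ ih => obtain ⟨n, hn⟩ := ih; exact ⟨n+1, .nt hn⟩
  | seq_ok _ _ ih1 ih2 =>
      obtain ⟨n, hn⟩ := ih1; obtain ⟨m, hm⟩ := ih2; exact ⟨n+m+1, .seq_ok hn hm⟩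
  | seq_fail _ ih => obtain ⟨n, hn⟩ := ih; exact ⟨n+1, .seq_fail hn⟩
  | choice_fst _ ih => obtain ⟨n, hn⟩ := ih; exact ⟨n+1, .choice_fst hn⟩
  | choice_snd _ _ ih1 ih2 =>
      obtain ⟨n, hn⟩ := ih1; obtain ⟨m, hm⟩ := ih2; exact ⟨n+m+1, .choice_snd hn hm⟩
  | not_succ _ ih => obtain ⟨n, hn⟩ := ih; exact ⟨n+1, .not_succ hn⟩
  | not_fail _ ih => obtain ⟨n, hn⟩ := ih; exact ⟨n+1, .not_fail hn⟩

theorem parses_det {e w r r'} (h : Parses G e w r) (h' : Parses G e w r') : r = r' := by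
  induction h generalizing r' with
  | eps => cases h'; rfl
  | term_ok a s =>
      cases h' with
      | term_ok => rfl
      | term_mismatch _ hne => exact absurd rfl hne
  | term_mismatch s hne =>
      cases h' with
      | term_ok => exact absurd rfl hne
      | term_mismatch => rfl
  | term_nil => cases h'; rfl
  | nt h ih => cases h' with | nt h' => exact ih h'
  | seq_ok h1 h2 ih1 ih2 =>
      cases h' with
      | seq_ok h1' h2' =>
          have := ih1 h1'; injection this with this; subst this; exact ih2 h2'
      | seq_fail h1' => exact absurd (ih1 h1') (by simp)
  | seq_fail h1 ih =>
      cases h' with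
      | seq_ok h1' h2' => exact absurd (ih h1') (by simp)
      | seq_fail => rfl
  | choice_fst h1 ih =>
      cases h' with
      | choice_fst h1' => exact ih h1'
      | choice_snd h1' h2' => exact absurd (ih h1') (by simp)
  | choice_snd h1 h2 ih1 ih2 =>
      cases h' with
      | choice_fst h1' => exact absurd (ih1 h1') (by simp)
      | choice_snd h1' h2' => exact ih2 h2'
  | not_succ h ih =>
      cases h' with
      | not_succ => rfl
      | not_fail h1' => exact absurd (ih h1') (by simp)
  | not_fail h ih =>
      cases h' with
      | not_succ h1' => exact absurd (ih h1') (by simp)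
      | not_fail => rfl

theorem parsesN_det {n m e w r r'} (h : ParsesN G n e w r) (h' : ParsesN G m e w r') : r = r' :=
  parses_det h.toParses h'.toParses

theorem parses_suffix' {e w r} (h : Parses G e w r) : ∀ s, r = some s → s <:+ w := by
  induction h with
  | eps => rintro s rfl'; injection rfl' with h; subst h; exact List.suffix_refl _
  | term_ok a s => rintro s' hs; injection hs with hs; subst hs; exact ⟨[a], rfl⟩
  | term_mismatch => intro s hs; cases hs
  | term_nil => intro s hs; cases hs
  | nt _ ih => exact ih
  | seq_ok _ _ ih1 ih2 =>
      intro s hs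
      exact (ih2 s hs).trans (ih1 _ rfl)
  | seq_fail => intro s hs; cases hs
  | choice_fst _ ih => exact ih
  | choice_snd _ _ _ ih2 => exact ih2
  | not_succ => rintro s hs; injection hs with h; subst h; exact List.suffix_refl _
  | not_fail => intro s hs; cases hs

theorem parses_suffix {e w s} (h : Parses G e w (some s)) : s <:+ w :=
  parses_suffix' h s rfl

/-- `failE` always fails. -/
theorem failE_none (w : List A) : Parses G failE w none :=
  .not_fail (.eps w)

theorem failEN_inv {n w r} (h : ParsesN G n (failE : PExp N A) w r) : r = none := by
  cases h with
  | not_succ h => cases h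
  | not_fail => rfl

theorem epsN_inv {n w r} (h : ParsesN G n (.eps : PExp N A) w r) : r = some w := by
  cases h; rfl

theorem termN_some_inv {n a w s} (h : ParsesN G n (.term a : PExp N A) w (some s)) :
    w = a :: s := by cases h; rfl

theorem ntN_inv {n B w r} (h : ParsesN G n (.nt B : PExp N A) w r) :
    ∃ m, m < n ∧ ParsesN G m (G.rule B) w r := by
  cases h with | nt h => exact ⟨_, Nat.lt_succ_self _, h⟩

theorem seqN_inv {n e₁ e₂ w r} (h : ParsesN G n (.seq e₁ e₂) w r) :
    (∃ n₁ n₂ w', n₁ < n ∧ n₂ < n ∧ ParsesN G n₁ e₁ w (some w') ∧ ParsesN G n₂ e₂ w' r) ∨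
      (r = none ∧ ∃ n₁, n₁ < n ∧ ParsesN G n₁ e₁ w none) := by
  cases h with
  | seq_ok h1 h2 => exact .inl ⟨_, _, _, by omega, by omega, h1, h2⟩
  | seq_fail h1 => exact .inr ⟨rfl, _, by omega, h1⟩

theorem choiceN_inv {n e₁ e₂ w r} (h : ParsesN G n (.choice e₁ e₂) w r) :
    (∃ n₁ w', n₁ < n ∧ r = some w' ∧ ParsesN G n₁ e₁ w (some w')) ∨
      (∃ n₁ n₂, n₁ < n ∧ n₂ < n ∧ ParsesN G n₁ e₁ w none ∧ ParsesN G n₂ e₂ w r) := by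
  cases h with
  | choice_fst h1 => exact .inl ⟨_, _, by omega, rfl, h1⟩
  | choice_snd h1 h2 => exact .inr ⟨_, _, by omega, by omega, h1, h2⟩

theorem notN_inv {n e w r} (h : ParsesN G n (.not e) w r) :
    (r = some w ∧ ∃ m, m < n ∧ ParsesN G m e w none) ∨
      (r = none ∧ ∃ m w', m < n ∧ ParsesN G m e w (some w')) := by
  cases h with
  | not_succ h => exact .inl ⟨rfl, _, by omega, h⟩
  | not_fail h => exact .inr ⟨rfl, _, _, by omega, h⟩

/-- Inversion for a successful parse of a prioritized choice over a list. -/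
theorem choiceEN_some {l : List (PExp N A)} {n w s}
    (h : ParsesN G n (choiceE l) w (some s)) :
    ∃ e ∈ l, ∃ m, m ≤ n ∧ ParsesN G m e w (some s) := by
  induction l generalizing n with
  | nil => exact absurd (failEN_inv h) (by simp)
  | cons e l ih =>
      rcases choiceN_inv h with ⟨n₁, w', hn₁, hw', h1⟩ | ⟨n₁, n₂, hn₁, hn₂, h1, h2⟩
      · injection hw' with hw'; subst hw'
        exact ⟨e, List.mem_cons_self, n₁, by omega, h1⟩
      · obtain ⟨e', he', m, hm, h'⟩ := ih h2
        exact ⟨e', List.mem_cons_of_mem _ he', m, by omega, h'⟩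

theorem choiceE_none {l : List (PExp N A)} {w} (h : ∀ e ∈ l, Parses G e w none) :
    Parses G (choiceE l) w none := by
  induction l with
  | nil => exact failE_none w
  | cons e l ih =>
      exact .choice_snd (h e (List.mem_cons_self))
        (ih fun e' he' => h e' (List.mem_cons_of_mem _ he'))

theorem choiceE_some {l₁ l₂ : List (PExp N A)} {e w s}
    (h₁ : ∀ e' ∈ l₁, Parses G e' w none) (h : Parses G e w (some s)) :
    Parses G (choiceE (l₁ ++ e :: l₂)) w (some s) := by
  induction l₁ with
  | nil => exact .choice_fst h
  | cons e' l₁ ih =>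
      exact .choice_snd (h₁ e' (List.mem_cons_self))
        (ih fun e'' he'' => h₁ e'' (List.mem_cons_of_mem _ he''))

end ParsesLemmas

/-! ### Part 1b: semantics of `anyE`, `endE`, `testE`, `consumeE` -/

section TestLemmas

variable {N A : Type} [Fintype A] {G : PEG N A}

theorem anyE_some (c : A) (tl : List A) : Parses G anyE (c :: tl) (some tl) := by
  classical
  have : ∀ l : List A, c ∈ l → Parses G (choiceE (l.map PExp.term)) (c :: tl) (some tl) := by
    intro l hl
    induction l with
    | nil => cases hl
    | cons b l ih =>
        by_cases hbc : b = c
        · subst hbc; exact .choice_fst (.term_ok _ _)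
        · have : c ∈ l := by
            rcases List.mem_cons.mp hl with h | h
            · exact absurd h.symm hbc
            · exact h
          exact .choice_snd (.term_mismatch tl hbc) (ih this)
  exact this _ (by simp)

theorem anyE_none : Parses G (anyE : PExp N A) [] none := by
  refine choiceE_none fun e he => ?_
  simp only [List.mem_map] at he
  obtain ⟨a, _, rfl⟩ := he
  exact .term_nil _

theorem endE_nil : Parses G (endE : PExp N A) [] (some []) := .not_succ anyE_none

theorem endE_cons (c : A) (tl : List A) : Parses G (endE : PExp N A) (c :: tl) none :=
  .not_fail (anyE_some c tl)

theorem testE_sym_some (c : A) (tl : List A) :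
    Parses G (testE (.sym c)) (c :: tl) (some (c :: tl)) :=
  .not_succ (.not_fail (.term_ok _ _))

theorem consumeE_sym_some (c : A) (tl : List A) :
    Parses G (consumeE (.sym c)) (c :: tl) (some tl) := .term_ok _ _

/-- If the tape symbol `a` does not match the current input, `testE a` fails. -/
theorem testE_none {a : TSym A} {w : List A}
    (h : ∀ c tl, w = c :: tl → a ≠ .sym c) (h' : w = [] → a ≠ .rmark) :
    Parses G (testE a) w none := by
  cases a with
  | lmark => exact failE_none w
  | rmark =>
      cases w with
      | nil => exact absurd rfl (h' rfl)
      | cons c tl => exact endE_cons c tl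
  | sym c =>
      cases w with
      | nil => exact .not_fail (.not_succ (.term_nil _))
      | cons b tl =>
          have hcb : c ≠ b := fun hcb => (h b tl rfl) (by rw [hcb])
          exact .not_fail (.not_succ (.term_mismatch tl hcb))

theorem consumeE_none {a : TSym A} {w : List A}
    (h : ∀ c tl, w = c :: tl → a ≠ .sym c) :
    Parses G (consumeE a) w none := by
  cases a with
  | lmark => exact failE_none w
  | rmark => exact failE_none w
  | sym c =>
      cases w with
      | nil => exact .term_nil _
      | cons b tl =>
          have hcb : c ≠ b := fun hcb => (h b tl rfl) (by rw [hcb])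
          exact .term_mismatch tl hcb

theorem testEN_some_inv {a : TSym A} {n w s} (h : ParsesN G n (testE a) w (some s)) :
    s = w ∧ ((∃ c tl, a = .sym c ∧ w = c :: tl) ∨ (a = .rmark ∧ w = [])) := by
  cases a with
  | lmark => exact absurd (failEN_inv h) (by simp)
  | rmark =>
      rcases notN_inv h with ⟨hs, m, _, hm⟩ | ⟨hs, _⟩
      · have hw : w = [] := by
          cases w with
          | nil => rfl
          | cons c tl => exact absurd (parses_det hm.toParses (anyE_some c tl)) (by simp)
        injection hs with hs
        exact ⟨hs, .inr ⟨rfl, hw⟩⟩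
      · exact absurd hs (by simp)
  | sym c =>
      rcases notN_inv h with ⟨hs, m, _, hm⟩ | ⟨hs, _⟩
      · injection hs with hs
        rcases notN_inv hm with ⟨hn, _⟩ | ⟨_, m', w', _, hm'⟩
        · exact absurd hn (by simp)
        · exact ⟨hs, .inl ⟨c, w', rfl, termN_some_inv hm'⟩⟩
      · exact absurd hs (by simp)

theorem consumeEN_some_inv {a : TSym A} {n w s} (h : ParsesN G n (consumeE a) w (some s)) :
    ∃ c, a = .sym c ∧ w = c :: s := by
  cases a with
  | lmark => exact absurd (failEN_inv h) (by simp)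
  | rmark => exact absurd (failEN_inv h) (by simp)
  | sym c => exact ⟨c, rfl, termN_some_inv h⟩

end TestLemmas

/-! ### Part 1c: tape positions vs. remaining input -/

section TapeLemmas

variable {A : Type}

theorem tape_of_cons {w : List A} {i : ℕ} {c : A} {s : List A} (hi : 1 ≤ i)
    (h : w.drop (i-1) = c :: s) : tapeNth w i = .sym c ∧ s = w.drop i ∧ i ≤ w.length := by
  have hlen : i - 1 < w.length := by
    by_contra hle
    rw [List.drop_eq_nil_of_le (by omega)] at h
    cases h
  have hget : w[i-1]? = some c := by
    have : (w.drop (i-1))[0]? = w[(i-1)+0]? := List.getElem?_drop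
    rw [h] at this
    simpa using this.symm
  refine ⟨?_, ?_, by omega⟩
  · unfold tapeNth
    rw [if_neg (by omega), hget]
  · have : w.drop i = (w.drop (i-1)).tail := by
      rw [← List.drop_one, List.drop_drop]
      congr 1
      omega
    rw [h, List.tail_cons] at this
    exact this.symm

theorem tape_of_nil {w : List A} {i : ℕ} (hi : 1 ≤ i) (h : w.drop (i-1) = []) :
    tapeNth w i = .rmark := by
  have hlen : w.length ≤ i - 1 := by
    by_contra hle
    have : (w.drop (i-1)).length = w.length - (i-1) := List.length_drop
    rw [h] at this
    simp at this
    omega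
  unfold tapeNth
  rw [if_neg (by omega)]
  have : w[i-1]? = none := by
    rw [List.getElem?_eq_none]; omega
  rw [this]

theorem drop_of_tape_sym {w : List A} {i : ℕ} {c : A} (hi : 1 ≤ i)
    (h : tapeNth w i = .sym c) : w.drop (i-1) = c :: w.drop i ∧ i ≤ w.length := by
  cases hw : w.drop (i-1) with
  | nil => rw [tape_of_nil hi hw] at h; cases h
  | cons b s =>
      obtain ⟨h1, h2, h3⟩ := tape_of_cons hi hw
      rw [h1] at h; injection h with h; subst h
      exact ⟨by rw [h2], h3⟩

theorem drop_of_tape_rmark {w : List A} {i : ℕ} (hi : 1 ≤ i)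
    (h : tapeNth w i = .rmark) : w.drop (i-1) = [] := by
  cases hw : w.drop (i-1) with
  | nil => rfl
  | cons b s => rw [(tape_of_cons hi hw).1] at h; cases h

theorem tape_cases {w : List A} {i : ℕ} (hi : 1 ≤ i) :
    (∃ c, tapeNth w i = .sym c) ∨ tapeNth w i = .rmark := by
  unfold tapeNth
  rw [if_neg (by omega)]
  cases w[i-1]? with
  | none => exact .inr rfl
  | some c => exact .inl ⟨c, rfl⟩

theorem tape_rmark_pos {w : List A} {i : ℕ} (hi : 1 ≤ i) (hin : i ≤ w.length + 1)
    (h : tapeNth w i = .rmark) : i = w.length + 1 := by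
  have := drop_of_tape_rmark hi h
  have hl : (w.drop (i-1)).length = w.length - (i-1) := List.length_drop
  rw [this] at hl
  simp at hl
  omega

theorem tape_sym_pos {w : List A} {i : ℕ} {c : A} (hi : 1 ≤ i)
    (h : tapeNth w i = .sym c) : i ≤ w.length := (drop_of_tape_sym hi h).2

theorem suffix_drop_exists {w s : List A} {i : ℕ} (hi : 1 ≤ i) (hin : i ≤ w.length + 1)
    (h : s <:+ w.drop (i-1)) : ∃ k, i ≤ k ∧ k ≤ w.length + 1 ∧ s = w.drop (k-1) := by
  obtain ⟨t, ht⟩ := h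
  refine ⟨w.length + 1 - s.length, ?_, by omega, ?_⟩
  · have := congrArg List.length ht
    simp [List.length_drop] at this
    omega
  · have hlen : s.length ≤ w.length := by
      have := congrArg List.length ht
      simp [List.length_drop] at this
      omega
    have hsw : s <:+ w := ⟨w.take (i-1) ++ t, by rw [List.append_assoc, ht, List.take_append_drop]⟩
    obtain ⟨t', ht'⟩ := hsw
    have : w.drop (w.length + 1 - s.length - 1) = w.drop t'.length := by
      congr 1
      have := congrArg List.length ht'
      simp at this
      omega
    rw [this, ← ht', List.drop_left]

theorem drop_pos_inj {w : List A} {j k : ℕ} (hj1 : 1 ≤ j) (hj : j ≤ w.length + 1)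
    (hk1 : 1 ≤ k) (hk : k ≤ w.length + 1) (h : w.drop (j-1) = w.drop (k-1)) : j = k := by
  have := congrArg List.length h
  simp [List.length_drop] at this
  omega

end TapeLemmas

/-! ### Part 2: machine run lemmas -/

section Machine

variable {Q A Γ : Type}

/-- The new head position for a move in direction `d`, with stored tag `t`, from `i`. -/
def dval (d : Dir) (t i : ℕ) : ℕ :=
  match d with
  | .left => i - 1
  | .down => i
  | .up => t
  | .right => i + 1

/-- `n`-step reachability. -/
def StepsN (M : DPPDA Q A Γ) (w : List A) : ℕ → Conf Q Γ → Conf Q Γ → Prop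
  | 0, c, c' => c = c'
  | n+1, c, c'' => ∃ c', M.step w c = some c' ∧ StepsN M w n c' c''

variable {M : DPPDA Q A Γ} {w : List A}

theorem stepsN_trans {n m : ℕ} {a b c : Conf Q Γ} (h : StepsN M w n a b)
    (h' : StepsN M w m b c) : StepsN M w (n + m) a c := by
  induction n generalizing a with
  | zero => cases h; simpa using h'
  | succ n ih =>
      obtain ⟨a₁, ha₁, h⟩ := h
      exact (by omega : (n + m) + 1 = n + 1 + m) ▸ ⟨a₁, ha₁, ih h⟩

theorem reaches_iff_stepsN {a b : Conf Q Γ} :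
    M.Reaches w a b ↔ ∃ n, StepsN M w n a b := by
  constructor
  · intro h
    induction h with
    | refl => exact ⟨0, rfl⟩
    | tail _ hstep ih =>
        obtain ⟨n, hn⟩ := ih
        exact ⟨n + 1, stepsN_trans hn ⟨_, hstep, rfl⟩⟩
  · rintro ⟨n, hn⟩
    induction n generalizing a with
    | zero => cases hn; exact Relation.ReflTransGen.refl
    | succ n ih =>
        obtain ⟨a₁, ha₁, h⟩ := hn
        exact Relation.ReflTransGen.head ha₁ (ih h)

theorem step_stack_nil {q : Q} {i : ℕ} : M.step w ⟨q, [], i⟩ = none := rfl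

theorem stepsN_nil {n : ℕ} {q : Q} {i : ℕ} {c : Conf Q Γ}
    (h : StepsN M w n ⟨q, [], i⟩ c) : c = ⟨q, [], i⟩ := by
  cases n with
  | zero => exact h.symm
  | succ n => obtain ⟨c₁, hc₁, _⟩ := h; rw [step_stack_nil] at hc₁; cases hc₁

theorem stepsN_stack_nil {n : ℕ} {c c' : Conf Q Γ} (h : StepsN M w n c c')
    (hnil : c.stack = []) : c' = c := by
  obtain ⟨q, st, i⟩ := c
  have : st = [] := hnil
  subst this
  exact stepsN_nil h

theorem stepsN_det {n m : ℕ} {a b c : Conf Q Γ} (hnm : n ≤ m)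
    (h : StepsN M w n a b) (h' : StepsN M w m a c) : StepsN M w (m - n) b c := by
  induction n generalizing a m with
  | zero => cases h; simpa using h'
  | succ n ih =>
      obtain ⟨a₁, ha₁, h⟩ := h
      obtain ⟨m', rfl⟩ : ∃ m', m = m' + 1 := ⟨m - 1, by omega⟩
      obtain ⟨a₁', ha₁', h'⟩ := h'
      rw [ha₁] at ha₁'
      injection ha₁' with ha₁'
      subst ha₁'
      exact (by omega : m' - n = m' + 1 - (n+1)) ▸ ih (by omega) h h'

theorem step_trans_none {q : Q} {Z : Γ} {t i : ℕ} {rest : List (Γ × ℕ)}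
    (htr : M.trans q (tapeNth w i) Z = none) :
    M.step w ⟨q, (Z, t) :: rest, i⟩ = none := by
  simp [DPPDA.step, htr]

theorem step_pop {q p : Q} {Z : Γ} {d : Dir} {t i : ℕ} {rest : List (Γ × ℕ)}
    (htr : M.trans q (tapeNth w i) Z = some (p, [], d)) :
    M.step w ⟨q, (Z, t) :: rest, i⟩ = some ⟨p, rest, dval d t i⟩ := by
  cases d <;> simp [DPPDA.step, htr, dval]

theorem step_push {q p : Q} {Z X : Γ} {Xs : List Γ} {d : Dir} {t i : ℕ}
    {rest : List (Γ × ℕ)}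
    (htr : M.trans q (tapeNth w i) Z = some (p, X :: Xs, d)) :
    M.step w ⟨q, (Z, t) :: rest, i⟩ =
      some ⟨p, ((X :: Xs).map fun Y => (Y, dval d t i)) ++ (Z, t) :: rest, dval d t i⟩ := by
  cases d <;> simp [DPPDA.step, htr, dval]

theorem step_push1 {q p : Q} {Z X : Γ} {d : Dir} {t i : ℕ} {rest : List (Γ × ℕ)}
    (htr : M.trans q (tapeNth w i) Z = some (p, [X], d)) :
    M.step w ⟨q, (Z, t) :: rest, i⟩ =
      some ⟨p, (X, dval d t i) :: (Z, t) :: rest, dval d t i⟩ := by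
  rw [step_push htr]; rfl

/-- Characterization of one step from a nonempty stack. -/
theorem step_cons_inv {q : Q} {Z : Γ} {t i : ℕ} {rest : List (Γ × ℕ)} {c' : Conf Q Γ}
    (hM : M.NormalForm)
    (h : M.step w ⟨q, (Z, t) :: rest, i⟩ = some c') :
    (∃ p d, M.trans q (tapeNth w i) Z = some (p, [], d) ∧
      c' = ⟨p, rest, dval d t i⟩) ∨
    (∃ p X d, M.trans q (tapeNth w i) Z = some (p, [X], d) ∧
      c' = ⟨p, (X, dval d t i) :: (Z, t) :: rest, dval d t i⟩) := by
  cases htr : M.trans q (tapeNth w i) Z with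
  | none => rw [step_trans_none htr] at h; cases h
  | some x =>
      obtain ⟨p, β, d⟩ := x
      cases β with
      | nil =>
          rw [step_pop htr] at h
          injection h with h
          exact .inl ⟨p, d, rfl, h.symm⟩
      | cons X Xs =>
          have : Xs = [] := by
            have := hM.2.2.1 q (tapeNth w i) Z p (X :: Xs) d htr
            simpa using this
          subst this
          rw [step_push1 htr] at h
          injection h with h
          exact .inr ⟨p, X, d, rfl, h.symm⟩

theorem step_append {q : Q} {st : List (Γ × ℕ)} {i : ℕ} {c' : Conf Q Γ}
    (ρ : List (Γ × ℕ)) (hne : st ≠ []) (h : M.step w ⟨q, st, i⟩ = some c') :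
    M.step w ⟨q, st ++ ρ, i⟩ = some ⟨c'.state, c'.stack ++ ρ, c'.pos⟩ := by
  cases st with
  | nil => exact absurd rfl hne
  | cons e rest =>
      obtain ⟨Z, t⟩ := e
      cases htr : M.trans q (tapeNth w i) Z with
      | none => rw [step_trans_none htr] at h; cases h
      | some x =>
          obtain ⟨p, β, d⟩ := x
          cases β with
          | nil =>
              rw [step_pop htr] at h
              injection h with h
              subst h
              rw [show ((Z,t) :: rest) ++ ρ = (Z,t) :: (rest ++ ρ) from rfl, step_pop htr]
          | cons X Xs =>
              rw [step_push htr] at h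
              injection h with h
              subst h
              rw [show ((Z,t) :: rest) ++ ρ = (Z,t) :: (rest ++ ρ) from rfl, step_push htr]
              simp

end Machine

section Machine2

variable {Q A Γ : Type} {M : DPPDA Q A Γ} {w : List A}

theorem step_proj {q : Q} {st ρ : List (Γ × ℕ)} {i : ℕ} {c' : Conf Q Γ}
    (hne : st ≠ []) (h : M.step w ⟨q, st ++ ρ, i⟩ = some c') :
    ∃ st', c'.stack = st' ++ ρ ∧ M.step w ⟨q, st, i⟩ = some ⟨c'.state, st', c'.pos⟩ := by
  cases st with
  | nil => exact absurd rfl hne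
  | cons e rest =>
      obtain ⟨Z, t⟩ := e
      rw [show ((Z,t) :: rest) ++ ρ = (Z,t) :: (rest ++ ρ) from rfl] at h
      cases htr : M.trans q (tapeNth w i) Z with
      | none => rw [step_trans_none htr] at h; cases h
      | some x =>
          obtain ⟨p, β, d⟩ := x
          cases β with
          | nil =>
              rw [step_pop htr] at h
              injection h with h
              subst h
              exact ⟨rest, rfl, by rw [step_pop htr]⟩
          | cons X Xs =>
              rw [step_push htr] at h
              injection h with h
              subst h
              exact ⟨((X :: Xs).map fun Y => (Y, dval d t i)) ++ (Z, t) :: rest, by simp,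
                by rw [step_push htr]⟩

theorem stepsN_append {n : ℕ} {q : Q} {st : List (Γ × ℕ)} {i : ℕ} {c : Conf Q Γ}
    (ρ : List (Γ × ℕ)) (h : StepsN M w n ⟨q, st, i⟩ c) (hne : st ≠ [])
    (hcne : c.stack ≠ []) :
    StepsN M w n ⟨q, st ++ ρ, i⟩ ⟨c.state, c.stack ++ ρ, c.pos⟩ := by
  induction n generalizing q st i with
  | zero => cases h; rfl
  | succ n ih =>
      obtain ⟨c₁, hc₁, h⟩ := h
      have hc₁ne : c₁.stack ≠ [] := by
        intro hnil
        rw [stepsN_stack_nil h hnil, hnil] at hcne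
        exact hcne rfl
      refine ⟨⟨c₁.state, c₁.stack ++ ρ, c₁.pos⟩, step_append ρ hne hc₁, ?_⟩
      exact ih (q := c₁.state) (st := c₁.stack) (i := c₁.pos) h hc₁ne

theorem stepsN_split : ∀ {n : ℕ} {st ρ : List (Γ × ℕ)} {q : Q} {i : ℕ} {c : Conf Q Γ},
    StepsN M w n ⟨q, st ++ ρ, i⟩ c → c.stack.length ≤ ρ.length →
    ∃ m s k, m ≤ n ∧ StepsN M w m ⟨q, st, i⟩ ⟨s, [], k⟩ ∧ StepsN M w (n - m) ⟨s, ρ, k⟩ c := by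
  intro n
  induction n with
  | zero =>
      intro st ρ q i c h hlen
      cases st with
      | nil => exact ⟨0, q, i, le_refl _, rfl, by simpa using h⟩
      | cons e st =>
          cases h
          simp at hlen
  | succ n ih =>
      intro st ρ q i c h hlen
      cases st with
      | nil => exact ⟨0, q, i, by omega, rfl, by simpa using h⟩
      | cons e st =>
          obtain ⟨c₁, hc₁, h⟩ := h
          obtain ⟨st', hst', hstep⟩ := step_proj (by simp) hc₁
          have h' : StepsN M w n ⟨c₁.state, st' ++ ρ, c₁.pos⟩ c := by
            rw [← hst']
            exact h
          obtain ⟨m, s, k, hm, h1, h2⟩ := ih h' hlen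
          exact ⟨m + 1, s, k, by omega, ⟨_, hstep, h1⟩, by simpa using h2⟩

theorem stepsN_bottom : ∀ {n : ℕ} {q : Q} {st : List (Γ × ℕ)} {e : Γ × ℕ} {i : ℕ}
    {c : Conf Q Γ}, StepsN M w n ⟨q, st ++ [e], i⟩ c → c.stack ≠ [] →
    ∃ st', c.stack = st' ++ [e] := by
  intro n
  induction n with
  | zero =>
      intro q st e i c h _
      cases h
      exact ⟨st, rfl⟩
  | succ n ih =>
      intro q st e i c h hcne
      obtain ⟨c₁, hc₁, h⟩ := h
      cases st with
      | nil =>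
          obtain ⟨Z, t⟩ := e
          rw [show ([] : List (Γ × ℕ)) ++ [(Z, t)] = [(Z, t)] from rfl] at hc₁
          cases htr : M.trans q (tapeNth w i) Z with
          | none => rw [step_trans_none htr] at hc₁; cases hc₁
          | some x =>
              obtain ⟨p, β, d⟩ := x
              cases β with
              | nil =>
                  rw [step_pop htr] at hc₁
                  injection hc₁ with hc₁
                  subst hc₁
                  rw [stepsN_stack_nil h rfl] at hcne
                  exact absurd rfl hcne
              | cons X Xs =>
                  rw [step_push htr] at hc₁
                  injection hc₁ with hc₁
                  subst hc₁
                  exact ih (st := ((X :: Xs).map fun Y => (Y, dval d t i)))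
                    (by simpa using h) hcne
      | cons f st₀ =>
          obtain ⟨st', hst', _⟩ := step_proj (st := f :: st₀) (ρ := [e]) (by simp) hc₁
          have h' : StepsN M w n ⟨c₁.state, st' ++ [e], c₁.pos⟩ c := by
            rw [← hst']
            exact h
          exact ih h' hcne

end Machine2

section Machine3

variable {Q A Γ : Type} {M : DPPDA Q A Γ} {w : List A}

/-- Invariant: the head position is ≥ 1, and so are the tags of all
non-bottom stack entries. -/
def PosGood (c : Conf Q Γ) : Prop :=
  1 ≤ c.pos ∧ ∀ e ∈ c.stack.dropLast, 1 ≤ (e : Γ × ℕ).2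

theorem step_posGood (hM : M.NormalForm) {c c' : Conf Q Γ}
    (h : M.step w c = some c') (hg : PosGood c) (hne : c'.stack ≠ []) : PosGood c' := by
  obtain ⟨q, st, i⟩ := c
  cases st with
  | nil => rw [step_stack_nil] at h; cases h
  | cons e rest =>
      obtain ⟨Z, t⟩ := e
      obtain ⟨hpos, htags⟩ := hg
      have hpos : 1 ≤ i := hpos
      rcases step_cons_inv hM h with ⟨p, d, htr, rfl⟩ | ⟨p, X, d, htr, rfl⟩
      · -- pop
        have hrest : rest ≠ [] := hne
        obtain ⟨r, rest', rfl⟩ : ∃ r rest', rest = r :: rest' := by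
          cases rest with
          | nil => exact absurd rfl hrest
          | cons r rest' => exact ⟨r, rest', rfl⟩
        have hdl : ((Z,t) :: r :: rest').dropLast = (Z,t) :: (r :: rest').dropLast := rfl
        constructor
        · show 1 ≤ dval d t i
          cases d with
          | left => exact absurd htr (hM.1 _ _ _ _ _)
          | down => exact hpos
          | right => exact Nat.le_succ_of_le hpos
          | up =>
              have : (1:ℕ) ≤ ((Z,t) : Γ × ℕ).2 := htags _ (by rw [hdl]; exact List.mem_cons_self)
              exact this
        · intro e he
          exact htags e (by rw [hdl]; exact List.mem_cons_of_mem _ he)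
      · -- push
        have hdv : 1 ≤ dval d t i := by
          cases d with
          | left => exact absurd htr (hM.1 _ _ _ _ _)
          | down => exact hpos
          | right => exact Nat.le_succ_of_le hpos
          | up => exact absurd (M.up_pop _ _ _ _ _ htr) (by simp)
        refine ⟨hdv, ?_⟩
        intro e he
        have hdl : ((X, dval d t i) :: (Z,t) :: rest).dropLast
            = (X, dval d t i) :: ((Z,t) :: rest).dropLast := rfl
        rw [hdl] at he
        rcases List.mem_cons.mp he with rfl | he
        · exact hdv
        · exact htags e he

theorem stepsN_posGood (hM : M.NormalForm) {n : ℕ} {c₀ c : Conf Q Γ}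
    (h : StepsN M w n c₀ c) (hg : PosGood c₀) (hne : c.stack ≠ []) : PosGood c := by
  induction n generalizing c₀ with
  | zero => cases h; exact hg
  | succ n ih =>
      obtain ⟨c₁, hc₁, h⟩ := h
      have hc₁ne : c₁.stack ≠ [] := by
        intro hnil
        rw [stepsN_stack_nil h hnil, hnil] at hne
        exact hne rfl
      exact ih h (step_posGood hM hc₁ hg hc₁ne)

/-- Bounded-length version of `EndsPop`, also recording the position `jr` of the
final pop configuration. -/
def EndsPopN (M : DPPDA Q A Γ) (w : List A) (n : ℕ) (q : Q) (Z : Γ) (t i : ℕ)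
    (p : Q) (d : Dir) (jr j : ℕ) : Prop :=
  ∃ m c, m ≤ n ∧ StepsN M w m ⟨q, [(Z, t)], i⟩ c ∧ c.stack = [(Z, t)] ∧ c.pos = jr ∧
    M.trans c.state (tapeNth w jr) Z = some (p, [], d) ∧
    M.step w c = some ⟨p, [], j⟩

theorem endsPop_iff {q : Q} {Z : Γ} {t i : ℕ} {p : Q} {d : Dir} {j : ℕ} :
    EndsPop M w q Z t i p d j ↔ ∃ n jr, EndsPopN M w n q Z t i p d jr j := by
  constructor
  · rintro ⟨c, hr, hst, htr, hstep⟩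
    obtain ⟨n, hn⟩ := reaches_iff_stepsN.mp hr
    exact ⟨n, c.pos, n, c, le_refl _, hn, hst, rfl, htr, hstep⟩
  · rintro ⟨n, jr, m, c, _, hn, hst, hjr, htr, hstep⟩
    exact ⟨c, reaches_iff_stepsN.mpr ⟨m, hn⟩, hst, hjr ▸ htr, hstep⟩

theorem endsPopN_j {n : ℕ} {q : Q} {Z : Γ} {t i : ℕ} {p : Q} {d : Dir} {jr j : ℕ}
    (h : EndsPopN M w n q Z t i p d jr j) : j = dval d t jr := by
  obtain ⟨m, c, _, _, hst, hjr, htr, hstep⟩ := h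
  obtain ⟨cq, cst, cpos⟩ := c
  have hst : cst = [(Z, t)] := hst
  have hjr : cpos = jr := hjr
  subst hst; subst hjr
  rw [step_pop htr] at hstep
  injection hstep with hstep
  exact (congrArg Conf.pos hstep).symm

theorem endsPop_unique {q : Q} {Z : Γ} {t i : ℕ} {p p' : Q} {d d' : Dir} {j j' : ℕ}
    (h : EndsPop M w q Z t i p d j) (h' : EndsPop M w q Z t i p' d' j') :
    p = p' ∧ d = d' ∧ j = j' := by
  obtain ⟨c, hr, hst, htr, hstep⟩ := h
  obtain ⟨c', hr', hst', htr', hstep'⟩ := h'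
  obtain ⟨n, hn⟩ := reaches_iff_stepsN.mp hr
  obtain ⟨m, hm⟩ := reaches_iff_stepsN.mp hr'
  have key : ∀ {a b : ℕ} {ca cb : Conf Q Γ}, a ≤ b →
      StepsN M w a ⟨q, [(Z,t)], i⟩ ca → StepsN M w b ⟨q, [(Z,t)], i⟩ cb →
      (∃ pa ja, M.step w ca = some ⟨pa, [], ja⟩) → cb.stack = [(Z, t)] → ca = cb := by
    intro a b ca cb hab ha hb hpa hcb
    have hd := stepsN_det hab ha hb
    cases hba : b - a with
    | zero => rw [hba] at hd; exact hd
    | succ k =>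
        rw [hba] at hd
        obtain ⟨c₁, hc₁, hd⟩ := hd
        obtain ⟨pa, ja, hpa⟩ := hpa
        rw [hpa] at hc₁
        injection hc₁ with hc₁
        subst hc₁
        have := stepsN_stack_nil hd rfl
        rw [this] at hcb
        cases hcb
  have hcc : c = c' := by
    rcases le_total n m with hnm | hnm
    · exact key hnm hn hm ⟨p, j, hstep⟩ hst'
    · exact (key hnm hm hn ⟨p', j', hstep'⟩ hst).symm
  subst hcc
  rw [htr] at htr'
  injection htr' with htr'
  injection htr' with h1 h2
  injection h2 with h2 h3
  rw [hstep] at hstep'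
  injection hstep' with hstep'
  refine ⟨h1, h3, ?_⟩
  exact congrArg Conf.pos hstep'

end Machine3

/-! ### Part 3a: the constructed grammar -/

section Grammar

variable {Q A Γ : Type} [Fintype Q] [DecidableEq Q] [Fintype A]
variable {M : DPPDA Q A Γ} {w : List A}

/-- Parse of a prioritized choice over a duplicate-free index list with a
distinguished index: all other alternatives fail. -/
theorem choiceE_nodup {N : Type} {G : PEG N A} {α : Type} {f : α → PExp N A}
    {l : List α} {a₀ : α} (hmem : a₀ ∈ l) (hnd : l.Nodup) {u : List A}
    {res : Option (List A)} (h0 : Parses G (f a₀) u res)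
    (hother : ∀ a ∈ l, a ≠ a₀ → Parses G (f a) u none) :
    Parses G (choiceE (l.map f)) u res := by
  classical
  cases res with
  | none =>
      refine choiceE_none fun e he => ?_
      simp only [List.mem_map] at he
      obtain ⟨a, ha, rfl⟩ := he
      by_cases haa : a = a₀
      · subst haa; exact h0
      · exact hother a ha haa
  | some s =>
      obtain ⟨l₁, l₂, rfl⟩ := List.append_of_mem hmem
      rw [List.map_append, List.map_cons]
      refine choiceE_some ?_ h0
      intro e' he'
      simp only [List.mem_map] at he'
      obtain ⟨a, ha, rfl⟩ := he'
      refine hother a (by simp [ha]) ?_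
      intro haa
      subst haa
      exact (List.disjoint_of_nodup_append hnd) ha (List.mem_cons_self)

/-- The list of tape symbols used in the constructed rules. -/
noncomputable abbrev aListOf (A : Type) [Fintype A] : List (TSym A) :=
  TSym.rmark :: ((Finset.univ : Finset A).toList.map TSym.sym)

theorem aListOf_nodup : (aListOf A).Nodup := by
  refine List.Nodup.cons (by simp) ?_
  exact (Finset.nodup_toList _).map fun a b hab => by injection hab

theorem tape_mem_aList {i : ℕ} (hi : 1 ≤ i) : tapeNth w i ∈ aListOf A := by
  rcases tape_cases (w := w) (i := i) hi with ⟨c, hc⟩ | hc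
  · rw [hc]; simp
  · rw [hc]; exact List.mem_cons_self

theorem ruleOf_dn {q p : Q} {Z : Γ} :
    ruleOf M (some (q, Z, p, PTag.dn)) =
      choiceE ((aListOf A).map (altOf M q Z p PTag.dn)) := rfl

theorem ruleOf_bar {q p : Q} {Z : Γ} :
    ruleOf M (some (q, Z, p, PTag.bar)) =
      choiceE ((aListOf A).map (altOf M q Z p PTag.bar)) := rfl

theorem ruleOf_up {q p : Q} {Z : Γ} :
    ruleOf M (some (q, Z, p, PTag.up)) =
      choiceE ((aListOf A).map (altOf M q Z p PTag.up)) := rfl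

theorem ruleOf_ud {q p : Q} {Z : Γ} :
    ruleOf M (some (q, Z, p, PTag.ud)) =
      .choice (.nt (some (q, Z, p, PTag.dn))) (.nt (some (q, Z, p, PTag.up))) := rfl

/-- A failing (mismatching) alternative. -/
theorem alt_mismatch {q p : Q} {Z : Γ} {t : PTag} {a : TSym A} {i : ℕ} (hi : 1 ≤ i)
    (ha : a ≠ tapeNth w i) :
    Parses (PEGof M) (altOf M q Z p t a) (w.drop (i-1)) none := by
  have hc : Parses (PEGof M) (consumeE a) (w.drop (i-1)) none :=
    consumeE_none fun c tl h hsym => ha (hsym.trans (tape_of_cons hi h).1.symm)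
  have ht : Parses (PEGof M) (testE a) (w.drop (i-1)) none :=
    testE_none (fun c tl h hsym => ha (hsym.trans (tape_of_cons hi h).1.symm))
      (fun hnil hr => ha (hr.trans (tape_of_nil hi hnil).symm))
  unfold altOf
  split
  · exact failE_none _
  · split
    all_goals try exact failE_none _
    all_goals try
      (split
       · exact ht
       · exact failE_none _)
    all_goals
      refine choiceE_none fun e he => ?_
    all_goals
      simp only [List.mem_map] at he
    all_goals
      obtain ⟨s, -, rfl⟩ := he
    all_goals
      first
        | exact .seq_fail hc
        | exact .not_fail (.not_succ (.seq_fail hc))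
        | exact .seq_fail ht

/-- `testE` of the current tape symbol succeeds without consuming. -/
theorem testE_tape_some {i : ℕ} (hi : 1 ≤ i) :
    Parses (PEGof M) (testE (tapeNth w i)) (w.drop (i-1)) (some (w.drop (i-1))) := by
  rcases tape_cases (w := w) (i := i) hi with ⟨c, hc⟩ | hc
  · rw [hc, (drop_of_tape_sym hi hc).1]
    exact testE_sym_some c _
  · rw [hc, drop_of_tape_rmark hi hc]
    exact endE_nil

/-- `consumeE` of the current tape symbol (an input letter) consumes it. -/
theorem consumeE_tape_some {i : ℕ} {c : A} (hi : 1 ≤ i) (hc : tapeNth w i = .sym c) :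
    Parses (PEGof M) (consumeE (tapeNth w i)) (w.drop (i-1)) (some (w.drop i)) := by
  rw [hc, (drop_of_tape_sym hi hc).1]
  exact consumeE_sym_some c _

/-- Assemble a parse of the whole rule from a parse of the alternative of the
current tape symbol. -/
theorem rule_parse {q p : Q} {Z : Γ} {t : PTag} {i : ℕ} {res : Option (List A)}
    (hi : 1 ≤ i)
    (hrule : ruleOf M (some (q, Z, p, t)) = choiceE ((aListOf A).map (altOf M q Z p t)))
    (h : Parses (PEGof M) (altOf M q Z p t (tapeNth w i)) (w.drop (i-1)) res) :
    Parses (PEGof M) (.nt (some (q, Z, p, t))) (w.drop (i-1)) res := by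
  refine .nt ?_
  show Parses (PEGof M) (ruleOf M (some (q, Z, p, t))) _ _
  rw [hrule]
  exact choiceE_nodup (tape_mem_aList hi) aListOf_nodup h
    (fun a _ haa => alt_mismatch hi haa)

end Grammar

section Grammar2

variable {Q A Γ : Type} [Fintype Q] [DecidableEq Q] [Fintype A]
variable {M : DPPDA Q A Γ} {w : List A}

theorem altOf_none {q p : Q} {Z : Γ} {t : PTag} {a : TSym A}
    (htr : M.trans q a Z = none) : altOf M q Z p t a = failE := by
  unfold altOf; rw [htr]

theorem altOf_pop {q r p : Q} {Z : Γ} {d : Dir} {a : TSym A} (t : PTag)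
    (htr : M.trans q a Z = some (r, [], d)) :
    altOf M q Z p t a =
      if (d = .down ∧ t = .dn) ∨ (d = .up ∧ (t = .bar ∨ t = .up)) then
        (if r = p then testE a else failE)
      else failE := by
  unfold altOf; rw [htr]
  cases d <;> cases t <;> simp

theorem altOf_push_right_dn {q r p : Q} {Z X : Γ} {a : TSym A}
    (htr : M.trans q a Z = some (r, [X], .right)) :
    altOf M q Z p PTag.dn a = choiceE (((Finset.univ : Finset Q).toList).map fun s =>
      .seq (consumeE a) (.seq (.nt (some (r, X, s, PTag.ud)))
        (.nt (some (s, Z, p, PTag.dn))))) := by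
  unfold altOf; rw [htr]

theorem altOf_push_right_bar {q r p : Q} {Z X : Γ} {a : TSym A}
    (htr : M.trans q a Z = some (r, [X], .right)) :
    altOf M q Z p PTag.bar a = choiceE (((Finset.univ : Finset Q).toList).map fun s =>
      .seq (consumeE a) (.seq (.nt (some (r, X, s, PTag.ud)))
        (.nt (some (s, Z, p, PTag.bar))))) := by
  unfold altOf; rw [htr]

theorem altOf_push_right_up {q r p : Q} {Z X : Γ} {a : TSym A}
    (htr : M.trans q a Z = some (r, [X], .right)) :
    altOf M q Z p PTag.up a = choiceE (((Finset.univ : Finset Q).toList).map fun s =>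
      .not (.not (.seq (consumeE a) (.seq (.nt (some (r, X, s, PTag.ud)))
        (.nt (some (s, Z, p, PTag.bar))))))) := by
  unfold altOf; rw [htr]

theorem altOf_push_down_dn {q r p : Q} {Z X : Γ} {a : TSym A}
    (htr : M.trans q a Z = some (r, [X], .down)) :
    altOf M q Z p PTag.dn a = choiceE (((Finset.univ : Finset Q).toList).map fun s =>
      .seq (testE a) (.seq (.nt (some (r, X, s, PTag.ud)))
        (.nt (some (s, Z, p, PTag.dn))))) := by
  unfold altOf; rw [htr]

theorem altOf_push_down_bar {q r p : Q} {Z X : Γ} {a : TSym A}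
    (htr : M.trans q a Z = some (r, [X], .down)) :
    altOf M q Z p PTag.bar a = choiceE (((Finset.univ : Finset Q).toList).map fun s =>
      .seq (testE a) (.seq (.nt (some (r, X, s, PTag.ud)))
        (.nt (some (s, Z, p, PTag.bar))))) := by
  unfold altOf; rw [htr]

theorem altOf_push_down_up {q r p : Q} {Z X : Γ} {a : TSym A}
    (htr : M.trans q a Z = some (r, [X], .down)) :
    altOf M q Z p PTag.up a = choiceE (((Finset.univ : Finset Q).toList).map fun s =>
      .seq (testE a) (.not (.not (.seq (.nt (some (r, X, s, PTag.ud)))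
        (.nt (some (s, Z, p, PTag.bar))))))) := by
  unfold altOf; rw [htr]

theorem endsPop_base {q p : Q} {Z : Γ} {i i' : ℕ} {d : Dir}
    (htr : M.trans q (tapeNth w i) Z = some (p, [], d)) :
    EndsPop M w q Z i' i p d (dval d i' i) :=
  ⟨⟨q, [(Z, i')], i⟩, .refl, rfl, htr, step_pop htr⟩

theorem endsPop_push {q r s₀ p : Q} {Z X : Γ} {d dX d₀ : Dir} {i i' i₁ k j : ℕ}
    (htr : M.trans q (tapeNth w i) Z = some (r, [X], d))
    (hd : dval d i' i = i₁)
    (hX : EndsPop M w r X i₁ i₁ s₀ dX k)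
    (hZ : EndsPop M w s₀ Z i' k p d₀ j) :
    EndsPop M w q Z i' i p d₀ j := by
  obtain ⟨cX, hrX, hstX, htrX, hstepX⟩ := hX
  obtain ⟨cZ, hrZ, hstZ, htrZ, hstepZ⟩ := hZ
  obtain ⟨mX, hmX⟩ := reaches_iff_stepsN.mp hrX
  have hlift : StepsN M w mX ⟨r, [(X, i₁), (Z, i')], i₁⟩
      ⟨cX.state, cX.stack ++ [(Z, i')], cX.pos⟩ := by
    have := stepsN_append [(Z, i')] hmX (by simp) (by rw [hstX]; simp)
    simpa using this
  have hpop : M.step w ⟨cX.state, cX.stack ++ [(Z, i')], cX.pos⟩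
      = some ⟨s₀, [(Z, i')], k⟩ := by
    have := step_append (q := cX.state) (st := cX.stack) (i := cX.pos) [(Z, i')]
      (by rw [hstX]; simp) (by exact hstepX)
    simpa using this
  refine ⟨cZ, ?_, hstZ, htrZ, hstepZ⟩
  have h1 : M.step w ⟨q, [(Z, i')], i⟩ = some ⟨r, [(X, i₁), (Z, i')], i₁⟩ := by
    rw [step_push1 htr, hd]
  exact Relation.ReflTransGen.head h1
    ((reaches_iff_stepsN.mpr ⟨mX, hlift⟩).trans (Relation.ReflTransGen.head hpop hrZ))

end Grammar2

section MainB

variable {Q A Γ : Type} [Fintype Q] [DecidableEq Q] [Fintype A]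
variable {M : DPPDA Q A Γ} {w : List A}

/-- Conclusion of a successful `↓`-parse. -/
def DnConcl (M : DPPDA Q A Γ) (w : List A) (q : Q) (Z : Γ) (p : Q) (i j : ℕ) : Prop :=
  ∀ i' : ℕ, EndsPop M w q Z i' i p Dir.down j

/-- Conclusion of a successful `↑`- or `‾`-parse. -/
def UpConcl (M : DPPDA Q A Γ) (w : List A) (q : Q) (Z : Γ) (p : Q) (i : ℕ) : Prop :=
  ∀ i' : ℕ, EndsPop M w q Z i' i p Dir.up i'

theorem ruleOf_sym {q p : Q} {Z : Γ} {t : PTag} (ht : t ≠ PTag.ud) :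
    ruleOf M (some (q, Z, p, t)) = choiceE ((aListOf A).map (altOf M q Z p t)) := by
  cases t with
  | dn => rfl
  | up => rfl
  | bar => rfl
  | ud => exact absurd rfl ht

theorem main_B (hM : M.NormalForm) :
    ∀ n : ℕ, ∀ (q p : Q) (Z : Γ) (t : PTag) (i : ℕ) (s : List A),
    1 ≤ i → i ≤ w.length + 1 →
    ParsesN (PEGof M) n (.nt (some (q, Z, p, t))) (w.drop (i-1)) (some s) →
    (t = .dn → ∃ j, i ≤ j ∧ j ≤ w.length + 1 ∧ s = w.drop (j-1) ∧ DnConcl M w q Z p i j) ∧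
    (t = .bar → UpConcl M w q Z p i) ∧
    (t = .up → s = w.drop (i-1) ∧ UpConcl M w q Z p i) ∧
    (t = .ud → (∃ j, i ≤ j ∧ j ≤ w.length + 1 ∧ s = w.drop (j-1) ∧ DnConcl M w q Z p i j) ∨
      (s = w.drop (i-1) ∧ UpConcl M w q Z p i)) := by
  intro n
  induction n using Nat.strong_induction_on with
  | _ n IH =>
  have STEP : ∀ n₃ n₄ : ℕ, n₃ < n → n₄ < n → ∀ (qq r s₀ p : Q) (Z X : Γ)
      (i i₁ : ℕ) (d : Dir) (w₂ s' : List A) (τc : PTag),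
      1 ≤ i₁ → i₁ ≤ w.length + 1 → i ≤ i₁ →
      M.trans qq (tapeNth w i) Z = some (r, [X], d) →
      (∀ i', dval d i' i = i₁) →
      ParsesN (PEGof M) n₃ (.nt (some (r, X, s₀, PTag.ud))) (w.drop (i₁-1)) (some w₂) →
      ParsesN (PEGof M) n₄ (.nt (some (s₀, Z, p, τc))) w₂ (some s') →
      (τc = .dn → ∃ j, i ≤ j ∧ j ≤ w.length + 1 ∧ s' = w.drop (j-1) ∧
        DnConcl M w qq Z p i j) ∧
      (τc = .bar → UpConcl M w qq Z p i) := by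
    intro n₃ n₄ hn₃ hn₄ qq r s₀ p Z X i i₁ d w₂ s' τc hi₁ hi₁n hii₁ htr hd hpud hpc
    have hud := (IH n₃ hn₃ r s₀ X PTag.ud i₁ w₂ hi₁ hi₁n hpud).2.2.2 rfl
    obtain ⟨k, hk1, hk2, hw₂, dX, hX⟩ :
        ∃ k, i₁ ≤ k ∧ k ≤ w.length + 1 ∧ w₂ = w.drop (k-1) ∧
          ∃ dX, EndsPop M w r X i₁ i₁ s₀ dX k := by
      rcases hud with ⟨k, hk1, hk2, hw₂, hDnX⟩ | ⟨hw₂, hUpX⟩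
      · exact ⟨k, hk1, hk2, hw₂, _, hDnX i₁⟩
      · exact ⟨i₁, le_refl _, hi₁n, hw₂, _, hUpX i₁⟩
    subst hw₂
    constructor
    · rintro rfl
      obtain ⟨j, hj1, hj2, hsj, hZ⟩ :=
        (IH n₄ hn₄ s₀ p Z PTag.dn k s' (by omega) hk2 hpc).1 rfl
      exact ⟨j, by omega, hj2, hsj, fun i' => endsPop_push htr (hd i') hX (hZ i')⟩
    · rintro rfl
      have hZ := (IH n₄ hn₄ s₀ p Z PTag.bar k s' (by omega) hk2 hpc).2.1 rfl
      exact fun i' => endsPop_push htr (hd i') hX (hZ i')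
  intro q p Z t i s hi hin hp
  obtain ⟨m, hmn, hp⟩ := ntN_inv hp
  by_cases htud : t = PTag.ud
  · subst htud
    refine ⟨fun h => (nomatch h), fun h => (nomatch h), fun h => (nomatch h), fun _ => ?_⟩
    replace hp : ParsesN (PEGof M) m (ruleOf M (some (q, Z, p, PTag.ud)))
        (w.drop (i-1)) (some s) := hp
    rw [ruleOf_ud] at hp
    rcases choiceN_inv hp with ⟨n₁, w', hn₁, hw', h1⟩ | ⟨n₁, n₂, hn₁, hn₂, h1, h2⟩
    · injection hw' with hw'
      subst hw'
      exact .inl ((IH n₁ (by omega) q p Z PTag.dn i s hi hin h1).1 rfl)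
    · exact .inr ((IH n₂ (by omega) q p Z PTag.up i s hi hin h2).2.2.1 rfl)
  · replace hp : ParsesN (PEGof M) m (ruleOf M (some (q, Z, p, t)))
        (w.drop (i-1)) (some s) := hp
    rw [ruleOf_sym htud] at hp
    obtain ⟨e, he, m', hm', hp⟩ := choiceEN_some hp
    simp only [List.mem_map] at he
    obtain ⟨a, hamem, rfl⟩ := he
    rcases htr : M.trans q a Z with _ | ⟨r, β, d⟩
    · rw [altOf_none (p := p) (t := t) htr] at hp
      exact absurd (failEN_inv hp) (by simp)
    · cases β with
      | nil =>
          rw [altOf_pop t htr] at hp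
          by_cases hcond : (d = Dir.down ∧ t = PTag.dn) ∨
              (d = Dir.up ∧ (t = PTag.bar ∨ t = PTag.up))
          · rw [if_pos hcond] at hp
            by_cases hrp : r = p
            · rw [if_pos hrp] at hp
              rw [hrp] at htr
              obtain ⟨hs, hcase⟩ := testEN_some_inv (G := PEGof M) (a := a) hp
              have ha : a = tapeNth w i := by
                rcases hcase with ⟨c, tl, rfl, hwc⟩ | ⟨rfl, hnil⟩
                · exact (tape_of_cons hi hwc).1.symm
                · exact (tape_of_nil hi hnil).symm
              subst ha
              refine ⟨?_, ?_, ?_, fun htt => absurd htt htud⟩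
              · rintro rfl
                obtain ⟨rfl, -⟩ | ⟨-, hh | hh⟩ := hcond
                · exact ⟨i, le_refl _, hin, hs, fun i' => endsPop_base htr⟩
                · exact (nomatch hh)
                · exact (nomatch hh)
              · rintro rfl
                obtain ⟨-, hh⟩ | ⟨rfl, -⟩ := hcond
                · exact (nomatch hh)
                · exact fun i' => endsPop_base htr
              · rintro rfl
                obtain ⟨-, hh⟩ | ⟨rfl, -⟩ := hcond
                · exact (nomatch hh)
                · exact ⟨hs, fun i' => endsPop_base htr⟩
            · rw [if_neg hrp] at hp
              exact absurd (failEN_inv hp) (by simp)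
          · rw [if_neg hcond] at hp
            exact absurd (failEN_inv hp) (by simp)
      | cons X Xs =>
          have hXs : Xs = [] := by
            have := hM.2.2.1 q a Z r (X :: Xs) d htr
            simpa using this
          subst hXs
          cases d with
          | left => exact absurd htr (hM.1 _ _ _ _ _)
          | up => exact absurd (M.up_pop _ _ _ _ _ htr) (by simp)
          | right =>
              cases t with
              | ud => exact absurd rfl htud
              | dn =>
                  rw [altOf_push_right_dn htr] at hp
                  obtain ⟨e, he, m₂, hm₂, hp⟩ := choiceEN_some hp
                  simp only [List.mem_map] at he
                  obtain ⟨s₀, -, rfl⟩ := he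
                  rcases seqN_inv hp with ⟨n₁, n₂, w₁, hn₁, hn₂, hp₁, hp₂⟩ | ⟨hnone, -⟩
                  swap
                  · exact absurd hnone (by simp)
                  obtain ⟨c, rfl, hwc⟩ := consumeEN_some_inv hp₁
                  obtain ⟨htape, hw₁, hilen⟩ := tape_of_cons hi hwc
                  subst hw₁
                  rcases seqN_inv hp₂ with ⟨n₃, n₄, w₂, hn₃, hn₄, hpud, hpdn⟩ | ⟨hnone, -⟩
                  swap
                  · exact absurd hnone (by simp)
                  rw [← htape] at htr
                  have hstep := STEP n₃ n₄ (by omega) (by omega) q r s₀ p Z X i (i+1)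
                    .right w₂ s PTag.dn (by omega) (by omega) (by omega) htr
                    (fun i' => rfl) (by exact hpud) hpdn
                  exact ⟨fun _ => hstep.1 rfl, fun h => (nomatch h), fun h => (nomatch h),
                    fun h => (nomatch h)⟩
              | bar =>
                  rw [altOf_push_right_bar htr] at hp
                  obtain ⟨e, he, m₂, hm₂, hp⟩ := choiceEN_some hp
                  simp only [List.mem_map] at he
                  obtain ⟨s₀, -, rfl⟩ := he
                  rcases seqN_inv hp with ⟨n₁, n₂, w₁, hn₁, hn₂, hp₁, hp₂⟩ | ⟨hnone, -⟩
                  swap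
                  · exact absurd hnone (by simp)
                  obtain ⟨c, rfl, hwc⟩ := consumeEN_some_inv hp₁
                  obtain ⟨htape, hw₁, hilen⟩ := tape_of_cons hi hwc
                  subst hw₁
                  rcases seqN_inv hp₂ with ⟨n₃, n₄, w₂, hn₃, hn₄, hpud, hpbar⟩ | ⟨hnone, -⟩
                  swap
                  · exact absurd hnone (by simp)
                  rw [← htape] at htr
                  have hstep := STEP n₃ n₄ (by omega) (by omega) q r s₀ p Z X i (i+1)
                    .right w₂ s PTag.bar (by omega) (by omega) (by omega) htr
                    (fun i' => rfl) (by exact hpud) hpbar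
                  exact ⟨fun h => (nomatch h), fun _ => hstep.2 rfl, fun h => (nomatch h),
                    fun h => (nomatch h)⟩
              | up =>
                  rw [altOf_push_right_up htr] at hp
                  obtain ⟨e, he, m₂, hm₂, hp⟩ := choiceEN_some hp
                  simp only [List.mem_map] at he
                  obtain ⟨s₀, -, rfl⟩ := he
                  rcases notN_inv hp with ⟨hs, m₃, hm₃, hp⟩ | ⟨hs, -⟩
                  swap
                  · exact absurd hs (by simp)
                  injection hs with hs
                  rcases notN_inv hp with ⟨hnone, -⟩ | ⟨-, m₄, w', hm₄, hp⟩
                  · exact absurd hnone (by simp)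
                  rcases seqN_inv hp with ⟨n₁, n₂, w₁, hn₁, hn₂, hp₁, hp₂⟩ | ⟨hnone, -⟩
                  swap
                  · exact absurd hnone (by simp)
                  obtain ⟨c, rfl, hwc⟩ := consumeEN_some_inv hp₁
                  obtain ⟨htape, hw₁, hilen⟩ := tape_of_cons hi hwc
                  subst hw₁
                  rcases seqN_inv hp₂ with ⟨n₃, n₄, w₂, hn₃, hn₄, hpud, hpbar⟩ | ⟨hnone, -⟩
                  swap
                  · exact absurd hnone (by simp)
                  rw [← htape] at htr
                  have hstep := STEP n₃ n₄ (by omega) (by omega) q r s₀ p Z X i (i+1)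
                    .right w₂ w' PTag.bar (by omega) (by omega) (by omega) htr
                    (fun i' => rfl) (by exact hpud) hpbar
                  exact ⟨fun h => (nomatch h), fun h => (nomatch h),
                    fun _ => ⟨hs, hstep.2 rfl⟩, fun h => (nomatch h)⟩
          | down =>
              cases t with
              | ud => exact absurd rfl htud
              | dn =>
                  rw [altOf_push_down_dn htr] at hp
                  obtain ⟨e, he, m₂, hm₂, hp⟩ := choiceEN_some hp
                  simp only [List.mem_map] at he
                  obtain ⟨s₀, -, rfl⟩ := he
                  rcases seqN_inv hp with ⟨n₁, n₂, w₁, hn₁, hn₂, hp₁, hp₂⟩ | ⟨hnone, -⟩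
                  swap
                  · exact absurd hnone (by simp)
                  obtain ⟨hw₁, hcase⟩ := testEN_some_inv hp₁
                  have ha : a = tapeNth w i := by
                    rcases hcase with ⟨c, tl, rfl, hwc⟩ | ⟨rfl, hnil⟩
                    · exact (tape_of_cons hi hwc).1.symm
                    · exact (tape_of_nil hi hnil).symm
                  subst ha
                  subst hw₁
                  rcases seqN_inv hp₂ with ⟨n₃, n₄, w₂, hn₃, hn₄, hpud, hpdn⟩ | ⟨hnone, -⟩
                  swap
                  · exact absurd hnone (by simp)
                  have hstep := STEP n₃ n₄ (by omega) (by omega) q r s₀ p Z X i i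
                    .down w₂ s PTag.dn hi hin (le_refl _) htr
                    (fun i' => rfl) hpud hpdn
                  exact ⟨fun _ => hstep.1 rfl, fun h => (nomatch h), fun h => (nomatch h),
                    fun h => (nomatch h)⟩
              | bar =>
                  rw [altOf_push_down_bar htr] at hp
                  obtain ⟨e, he, m₂, hm₂, hp⟩ := choiceEN_some hp
                  simp only [List.mem_map] at he
                  obtain ⟨s₀, -, rfl⟩ := he
                  rcases seqN_inv hp with ⟨n₁, n₂, w₁, hn₁, hn₂, hp₁, hp₂⟩ | ⟨hnone, -⟩
                  swap
                  · exact absurd hnone (by simp)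
                  obtain ⟨hw₁, hcase⟩ := testEN_some_inv hp₁
                  have ha : a = tapeNth w i := by
                    rcases hcase with ⟨c, tl, rfl, hwc⟩ | ⟨rfl, hnil⟩
                    · exact (tape_of_cons hi hwc).1.symm
                    · exact (tape_of_nil hi hnil).symm
                  subst ha
                  subst hw₁
                  rcases seqN_inv hp₂ with ⟨n₃, n₄, w₂, hn₃, hn₄, hpud, hpbar⟩ | ⟨hnone, -⟩
                  swap
                  · exact absurd hnone (by simp)
                  have hstep := STEP n₃ n₄ (by omega) (by omega) q r s₀ p Z X i i
                    .down w₂ s PTag.bar hi hin (le_refl _) htr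
                    (fun i' => rfl) hpud hpbar
                  exact ⟨fun h => (nomatch h), fun _ => hstep.2 rfl, fun h => (nomatch h),
                    fun h => (nomatch h)⟩
              | up =>
                  rw [altOf_push_down_up htr] at hp
                  obtain ⟨e, he, m₂, hm₂, hp⟩ := choiceEN_some hp
                  simp only [List.mem_map] at he
                  obtain ⟨s₀, -, rfl⟩ := he
                  rcases seqN_inv hp with ⟨n₁, n₂, w₁, hn₁, hn₂, hp₁, hp₂⟩ | ⟨hnone, -⟩
                  swap
                  · exact absurd hnone (by simp)
                  obtain ⟨hw₁, hcase⟩ := testEN_some_inv hp₁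
                  have ha : a = tapeNth w i := by
                    rcases hcase with ⟨c, tl, rfl, hwc⟩ | ⟨rfl, hnil⟩
                    · exact (tape_of_cons hi hwc).1.symm
                    · exact (tape_of_nil hi hnil).symm
                  subst ha
                  rcases notN_inv hp₂ with ⟨hs, m₃, hm₃, hp₂⟩ | ⟨hs, -⟩
                  swap
                  · exact absurd hs (by simp)
                  injection hs with hs
                  rcases notN_inv hp₂ with ⟨hnone, -⟩ | ⟨-, m₄, w', hm₄, hp₂⟩
                  · exact absurd hnone (by simp)
                  rcases seqN_inv hp₂ with ⟨n₃, n₄, w₂, hn₃, hn₄, hpud, hpbar⟩ | ⟨hnone, -⟩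
                  swap
                  · exact absurd hnone (by simp)
                  subst hw₁
                  have hstep := STEP n₃ n₄ (by omega) (by omega) q r s₀ p Z X i i
                    .down w₂ w' PTag.bar hi hin (le_refl _) htr
                    (fun i' => rfl) hpud hpbar
                  exact ⟨fun h => (nomatch h), fun h => (nomatch h),
                    fun _ => ⟨hs, hstep.2 rfl⟩, fun h => (nomatch h)⟩

end MainB

section Machine4

variable {Q A Γ : Type} {M : DPPDA Q A Γ} {w : List A}

theorem stepsN_last {n : ℕ} {c₀ c₂ : Conf Q Γ} (h : StepsN M w (n+1) c₀ c₂) :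
    ∃ c₁, StepsN M w n c₀ c₁ ∧ M.step w c₁ = some c₂ := by
  induction n generalizing c₀ with
  | zero =>
      obtain ⟨c₁, hc₁, h⟩ := h
      cases h
      exact ⟨c₀, rfl, hc₁⟩
  | succ n ih =>
      obtain ⟨c₁, hc₁, h⟩ := h
      obtain ⟨cmid, hmid, hlast⟩ := ih h
      exact ⟨cmid, ⟨c₁, hc₁, hmid⟩, hlast⟩

end Machine4

section MainA

variable {Q A Γ : Type} [Fintype Q] [DecidableEq Q] [Fintype A]
variable {M : DPPDA Q A Γ} {w : List A}

theorem main_A (hM : M.NormalForm) :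
    ∀ n : ℕ, ∀ (q p₀ : Q) (Z : Γ) (tg i : ℕ) (d₀ : Dir) (jr j₀ : ℕ), 1 ≤ i →
    EndsPopN M w n q Z tg i p₀ d₀ jr j₀ →
    ∀ p : Q,
      Parses (PEGof M) (.nt (some (q, Z, p, PTag.dn))) (w.drop (i-1))
        (if p = p₀ ∧ d₀ = Dir.down then some (w.drop (j₀-1)) else none) ∧
      Parses (PEGof M) (.nt (some (q, Z, p, PTag.bar))) (w.drop (i-1))
        (if p = p₀ ∧ d₀ = Dir.up then some (w.drop (jr-1)) else none) ∧
      Parses (PEGof M) (.nt (some (q, Z, p, PTag.up))) (w.drop (i-1))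
        (if p = p₀ ∧ d₀ = Dir.up then some (w.drop (i-1)) else none) := by
  intro n
  induction n using Nat.strong_induction_on with
  | _ n IH =>
  intro q p₀ Z tg i d₀ jr j₀ hi h
  obtain ⟨m, c, hmn, hsteps, hcst, hcpos, hctr, hcstep⟩ := h
  cases m with
  | zero =>
      have hc : (⟨q, [(Z, tg)], i⟩ : Conf Q Γ) = c := hsteps
      subst hc
      have hjr : i = jr := hcpos
      subst hjr
      rw [step_pop hctr] at hcstep
      injection hcstep with hcstep
      have hj₀ : j₀ = dval d₀ tg i := (congrArg Conf.pos hcstep).symm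
      rcases hM.2.1 _ _ _ _ _ hctr with rfl | rfl
      · -- final pop with ↓, j₀ = i
        have hj₀' : j₀ = i := hj₀
        subst hj₀'
        intro p
        refine ⟨?_, ?_, ?_⟩
        · refine rule_parse hi ruleOf_dn ?_
          rw [altOf_pop PTag.dn hctr, if_pos (Or.inl ⟨rfl, rfl⟩)]
          by_cases hpp : p₀ = p
          · rw [if_pos hpp, if_pos ⟨hpp.symm, rfl⟩]
            exact testE_tape_some hi
          · rw [if_neg hpp, if_neg (fun hc => hpp hc.1.symm)]
            exact failE_none _
        · refine rule_parse hi ruleOf_bar ?_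
          rw [altOf_pop PTag.bar hctr, if_neg (by simp), if_neg (by simp)]
          exact failE_none _
        · refine rule_parse hi ruleOf_up ?_
          rw [altOf_pop PTag.up hctr, if_neg (by simp), if_neg (by simp)]
          exact failE_none _
      · -- final pop with ↑
        intro p
        refine ⟨?_, ?_, ?_⟩
        · refine rule_parse hi ruleOf_dn ?_
          rw [altOf_pop PTag.dn hctr, if_neg (by simp), if_neg (by simp)]
          exact failE_none _
        · refine rule_parse hi ruleOf_bar ?_
          rw [altOf_pop PTag.bar hctr, if_pos (Or.inr ⟨rfl, Or.inl rfl⟩)]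
          by_cases hpp : p₀ = p
          · rw [if_pos hpp, if_pos ⟨hpp.symm, rfl⟩]
            exact testE_tape_some hi
          · rw [if_neg hpp, if_neg (fun hc => hpp hc.1.symm)]
            exact failE_none _
        · refine rule_parse hi ruleOf_up ?_
          rw [altOf_pop PTag.up hctr, if_pos (Or.inr ⟨rfl, Or.inr rfl⟩)]
          by_cases hpp : p₀ = p
          · rw [if_pos hpp, if_pos ⟨hpp.symm, rfl⟩]
            exact testE_tape_some hi
          · rw [if_neg hpp, if_neg (fun hc => hpp hc.1.symm)]
            exact failE_none _
  | succ m₀ =>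
      obtain ⟨c₁, hstep1, hsteps⟩ := hsteps
      rcases step_cons_inv hM hstep1 with ⟨r, d, htr, rfl⟩ | ⟨r, X, d, htr, rfl⟩
      · -- first move pops: the run would be over at once, contradiction
        have hc := stepsN_stack_nil hsteps rfl
        rw [hc] at hcst
        simp at hcst
      · -- first move pushes X
        have EXTRACT : ∀ i₁ : ℕ, 1 ≤ i₁ →
            StepsN M w m₀ ⟨r, [(X, i₁), (Z, tg)], i₁⟩ c →
            ∃ s₀ k, 1 ≤ k ∧
              (∀ s : Q, Parses (PEGof M) (.nt (some (r, X, s, PTag.ud))) (w.drop (i₁-1))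
                (if s = s₀ then some (w.drop (k-1)) else none)) ∧
              (∀ p : Q,
                Parses (PEGof M) (.nt (some (s₀, Z, p, PTag.dn))) (w.drop (k-1))
                  (if p = p₀ ∧ d₀ = Dir.down then some (w.drop (j₀-1)) else none) ∧
                Parses (PEGof M) (.nt (some (s₀, Z, p, PTag.bar))) (w.drop (k-1))
                  (if p = p₀ ∧ d₀ = Dir.up then some (w.drop (jr-1)) else none)) := by
          intro i₁ hi₁ hsteps'
          obtain ⟨m₁, s₀, k, hm₁, hXsteps, hZsteps⟩ :=
            stepsN_split (st := [(X, i₁)]) (ρ := [(Z, tg)]) (by exact hsteps')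
              (by simp [hcst])
          cases m₁ with
          | zero => exact absurd (congrArg Conf.stack hXsteps) (by simp)
          | succ mX =>
              obtain ⟨cX, hXrun, hXpop⟩ := stepsN_last hXsteps
              have hXne : cX.stack ≠ [] := by
                intro hnil
                obtain ⟨cq, cs, cp⟩ := cX
                have : cs = [] := hnil
                subst this
                rw [step_stack_nil] at hXpop
                cases hXpop
              obtain ⟨stX, hstX⟩ := stepsN_bottom (st := []) (by exact hXrun) hXne
              obtain ⟨dX, hcXstack, htrX, hkk⟩ :
                  ∃ dX, cX.stack = [(X, i₁)] ∧
                    M.trans cX.state (tapeNth w cX.pos) X = some (s₀, [], dX) ∧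
                    k = dval dX i₁ cX.pos := by
                obtain ⟨cq, cs, cp⟩ := cX
                have hstX' : cs = stX ++ [(X, i₁)] := hstX
                subst hstX'
                cases stX with
                | nil =>
                    rcases step_cons_inv hM hXpop with ⟨pX, dX, htrX, heq⟩ |
                      ⟨pX, Y, dX, htrX, heq⟩
                    · injection heq with h1 h2 h3
                      subst h1
                      exact ⟨dX, rfl, htrX, h3⟩
                    · injection heq with h1 h2 h3
                      cases h2
                | cons f stX' =>
                    obtain ⟨fZ, ft⟩ := f
                    rcases step_cons_inv hM hXpop with ⟨pX, dX, htrX, heq⟩ |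
                      ⟨pX, Y, dX, htrX, heq⟩
                    · injection heq with h1 h2 h3
                      exact absurd h2 (by simp)
                    · injection heq with h1 h2 h3
                      cases h2
              have hposX : 1 ≤ cX.pos :=
                (stepsN_posGood hM (by exact hXrun) ⟨hi₁, by simp⟩ hXne).1
              have hk1 : 1 ≤ k := by
                rcases hM.2.1 _ _ _ _ _ htrX with rfl | rfl
                · exact hkk ▸ hposX
                · exact hkk ▸ hi₁
              have hXE : EndsPopN M w mX r X i₁ i₁ s₀ dX cX.pos k :=
                ⟨mX, cX, le_refl _, (by exact hXrun), hcXstack, rfl, htrX, hXpop⟩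
              have IH_X := IH mX (by omega) r s₀ X i₁ i₁ dX cX.pos k hi₁ hXE
              have IH_Z := IH (m₀ - (mX + 1)) (by omega) s₀ p₀ Z tg k d₀ jr j₀ hk1
                ⟨m₀ - (mX + 1), c, le_refl _, hZsteps, hcst, hcpos, hctr, hcstep⟩
              refine ⟨s₀, k, hk1, ?_, fun p => ⟨(IH_Z p).1, (IH_Z p).2.1⟩⟩
              intro s
              have hdn := (IH_X s).1
              have hup := (IH_X s).2.2
              refine .nt ?_
              show Parses (PEGof M) (ruleOf M (some (r, X, s, PTag.ud))) _ _
              rw [ruleOf_ud]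
              by_cases hss : s = s₀
              · rcases hM.2.1 _ _ _ _ _ htrX with rfl | rfl
                · rw [if_pos ⟨hss, rfl⟩] at hdn
                  rw [if_pos hss]
                  exact .choice_fst hdn
                · rw [if_neg (by simp)] at hdn
                  rw [if_pos ⟨hss, rfl⟩] at hup
                  rw [if_pos hss]
                  have hk : k = i₁ := hkk
                  rw [hk]
                  exact .choice_snd hdn hup
              · rw [if_neg hss]
                rw [if_neg (fun hc => hss hc.1)] at hdn
                rw [if_neg (fun hc => hss hc.1)] at hup
                exact .choice_snd hdn hup
        cases d with
        | left => exact absurd htr (hM.1 _ _ _ _ _)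
        | up => exact absurd (M.up_pop _ _ _ _ _ htr) (by simp)
        | right =>
            obtain ⟨cc, htape⟩ | htape := tape_cases (w := w) (i := i) hi
            swap
            · rw [htape] at htr
              exact absurd htr (M.no_right_rmark _ _ _ _)
            obtain ⟨s₀, k, hk1, hud, hZ⟩ := EXTRACT (i + 1) (by omega) (by exact hsteps)
            have hcons : Parses (PEGof M) (consumeE (tapeNth w i)) (w.drop (i-1))
                (some (w.drop i)) := consumeE_tape_some hi htape
            intro p
            refine ⟨?_, ?_, ?_⟩
            · refine rule_parse hi ruleOf_dn ?_
              rw [altOf_push_right_dn htr]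
              refine choiceE_nodup (Finset.mem_toList.mpr (Finset.mem_univ s₀))
                (Finset.nodup_toList _) ?_ ?_
              · have hud₀ := hud s₀
                rw [if_pos rfl] at hud₀
                exact .seq_ok hcons (.seq_ok (by exact hud₀) (hZ p).1)
              · intro s hsmem hss
                have huds := hud s
                rw [if_neg hss] at huds
                exact .seq_ok hcons (.seq_fail (by exact huds))
            · refine rule_parse hi ruleOf_bar ?_
              rw [altOf_push_right_bar htr]
              refine choiceE_nodup (Finset.mem_toList.mpr (Finset.mem_univ s₀))
                (Finset.nodup_toList _) ?_ ?_
              · have hud₀ := hud s₀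
                rw [if_pos rfl] at hud₀
                exact .seq_ok hcons (.seq_ok (by exact hud₀) (hZ p).2)
              · intro s hsmem hss
                have huds := hud s
                rw [if_neg hss] at huds
                exact .seq_ok hcons (.seq_fail (by exact huds))
            · refine rule_parse hi ruleOf_up ?_
              rw [altOf_push_right_up htr]
              refine choiceE_nodup (Finset.mem_toList.mpr (Finset.mem_univ s₀))
                (Finset.nodup_toList _) ?_ ?_
              · have hud₀ := hud s₀
                rw [if_pos rfl] at hud₀
                by_cases hcond : p = p₀ ∧ d₀ = Dir.up
                · rw [if_pos hcond]
                  have hbar := (hZ p).2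
                  rw [if_pos hcond] at hbar
                  exact .not_succ (.not_fail (.seq_ok hcons (.seq_ok (by exact hud₀) hbar)))
                · rw [if_neg hcond]
                  have hbar := (hZ p).2
                  rw [if_neg hcond] at hbar
                  exact .not_fail (.not_succ (.seq_ok hcons (.seq_ok (by exact hud₀) hbar)))
              · intro s hsmem hss
                have huds := hud s
                rw [if_neg hss] at huds
                exact .not_fail (.not_succ (.seq_ok hcons (.seq_fail (by exact huds))))
        | down =>
            obtain ⟨s₀, k, hk1, hud, hZ⟩ := EXTRACT i hi (by exact hsteps)
            have htest : Parses (PEGof M) (testE (tapeNth w i)) (w.drop (i-1))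
                (some (w.drop (i-1))) := testE_tape_some hi
            intro p
            refine ⟨?_, ?_, ?_⟩
            · refine rule_parse hi ruleOf_dn ?_
              rw [altOf_push_down_dn htr]
              refine choiceE_nodup (Finset.mem_toList.mpr (Finset.mem_univ s₀))
                (Finset.nodup_toList _) ?_ ?_
              · have hud₀ := hud s₀
                rw [if_pos rfl] at hud₀
                exact .seq_ok htest (.seq_ok (by exact hud₀) (hZ p).1)
              · intro s hsmem hss
                have huds := hud s
                rw [if_neg hss] at huds
                exact .seq_ok htest (.seq_fail (by exact huds))
            · refine rule_parse hi ruleOf_bar ?_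
              rw [altOf_push_down_bar htr]
              refine choiceE_nodup (Finset.mem_toList.mpr (Finset.mem_univ s₀))
                (Finset.nodup_toList _) ?_ ?_
              · have hud₀ := hud s₀
                rw [if_pos rfl] at hud₀
                exact .seq_ok htest (.seq_ok (by exact hud₀) (hZ p).2)
              · intro s hsmem hss
                have huds := hud s
                rw [if_neg hss] at huds
                exact .seq_ok htest (.seq_fail (by exact huds))
            · refine rule_parse hi ruleOf_up ?_
              rw [altOf_push_down_up htr]
              refine choiceE_nodup (Finset.mem_toList.mpr (Finset.mem_univ s₀))
                (Finset.nodup_toList _) ?_ ?_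
              · have hud₀ := hud s₀
                rw [if_pos rfl] at hud₀
                by_cases hcond : p = p₀ ∧ d₀ = Dir.up
                · rw [if_pos hcond]
                  have hbar := (hZ p).2
                  rw [if_pos hcond] at hbar
                  exact .seq_ok htest (.not_succ (.not_fail (.seq_ok (by exact hud₀) hbar)))
                · rw [if_neg hcond]
                  have hbar := (hZ p).2
                  rw [if_neg hcond] at hbar
                  exact .seq_ok htest (.not_fail (.not_succ (.seq_ok (by exact hud₀) hbar)))
              · intro s hsmem hss
                have huds := hud s
                rw [if_neg hss] at huds
                exact .seq_ok htest (.not_fail (.not_succ (.seq_fail (by exact huds))))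

end MainA

/-- Let `M` be a one-way DPPDA in normal form and `G_M` its
constructed PEG.  For every input `w = w₁⋯w_n`, states `q, p`, stack symbol `Z` and
position `1 ≤ i ≤ n+1` (the remaining input at position `j` being `w.drop (j-1)`):
(1) for every `i ≤ j ≤ n+1`, `R([qZp↓], w_i⋯w_n) = w_j⋯w_n` iff for every tag `i'`
the run of `M` from `(q, (Z, i'), i)` ends by popping `Z` in state `p` at head
position `j` with final pop direction `↓`;
(2) there exists `i ≤ j ≤ n+1` with `R([qZp̄], w_i⋯w_n) = w_j⋯w_n` iff for every
tag `i'` the run from `(q, (Z, i'), i)` ends by popping `Z` in state `p` at head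
position `i'` with final pop direction `↑`;
(3) `R([qZp↑], w_i⋯w_n) = w_i⋯w_n` iff for every tag `i'` the run from
`(q, (Z, i'), i)` ends by popping `Z` in state `p` at head position `i'` with final
pop direction `↑`. -/
theorem pegOf_simulates_dppda {Q A Γ : Type} [Fintype Q] [DecidableEq Q] [Fintype A]
    (M : DPPDA Q A Γ) (hM : M.NormalForm) (w : List A) (q p : Q) (Z : Γ)
    (i : ℕ) (hi : 1 ≤ i) (hin : i ≤ w.length + 1) :
    (∀ j, i ≤ j → j ≤ w.length + 1 →
      (Parses (PEGof M) (.nt (some (q, Z, p, PTag.dn)))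
          (w.drop (i - 1)) (some (w.drop (j - 1))) ↔
        ∀ i' : ℕ, EndsPop M w q Z i' i p Dir.down j)) ∧
    ((∃ j, i ≤ j ∧ j ≤ w.length + 1 ∧
        Parses (PEGof M) (.nt (some (q, Z, p, PTag.bar)))
          (w.drop (i - 1)) (some (w.drop (j - 1)))) ↔
      ∀ i' : ℕ, EndsPop M w q Z i' i p Dir.up i') ∧
    (Parses (PEGof M) (.nt (some (q, Z, p, PTag.up)))
        (w.drop (i - 1)) (some (w.drop (i - 1))) ↔
      ∀ i' : ℕ, EndsPop M w q Z i' i p Dir.up i') := by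
  refine ⟨?_, ?_, ?_⟩
  · intro j hij hjn
    constructor
    · intro hp
      obtain ⟨n, hn⟩ := hp.toN
      obtain ⟨j', hj'1, hj'2, hs, hconcl⟩ :=
        (main_B hM n q p Z PTag.dn i (w.drop (j-1)) hi hin hn).1 rfl
      have hjj : j = j' := drop_pos_inj (by omega) hjn (by omega) hj'2 hs
      subst hjj
      exact hconcl
    · intro hE
      obtain ⟨nn, jr, hN⟩ := endsPop_iff.mp (hE 0)
      have hpar := (main_A hM nn q p Z 0 i Dir.down jr j hi hN p).1
      rw [if_pos ⟨rfl, rfl⟩] at hpar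
      exact hpar
  · constructor
    · rintro ⟨j, hij, hjn, hp⟩
      obtain ⟨n, hn⟩ := hp.toN
      exact (main_B hM n q p Z PTag.bar i (w.drop (j-1)) hi hin hn).2.1 rfl
    · intro hE
      obtain ⟨nn, jr, hN⟩ := endsPop_iff.mp (hE 0)
      have hpar := (main_A hM nn q p Z 0 i Dir.up jr 0 hi hN p).2.1
      rw [if_pos ⟨rfl, rfl⟩] at hpar
      obtain ⟨j, hij, hjn, hs⟩ := suffix_drop_exists hi hin (parses_suffix hpar)
      rw [hs] at hpar
      exact ⟨j, hij, hjn, hpar⟩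
  · constructor
    · intro hp
      obtain ⟨n, hn⟩ := hp.toN
      exact ((main_B hM n q p Z PTag.up i (w.drop (i-1)) hi hin hn).2.2.1 rfl).2
    · intro hE
      obtain ⟨nn, jr, hN⟩ := endsPop_iff.mp (hE 0)
      have hpar := (main_A hM nn q p Z 0 i Dir.up jr 0 hi hN p).2.2
      rw [if_pos ⟨rfl, rfl⟩] at hpar
      exact hpar
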